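/- Let n ≥ 1 and let S be a skew Boolean algebra freely generated (over the variety of all skew Boolean algebras) by a set of n distinct elements. Then the number α of atoms of S satisfies 4·α = n(n+1)·2^{n}, i.e. α = n(n+1)·2^{n−2}. -/

import Mathlib

universe u

/-- A skew Boolean algebra. -/
class SBA (S : Type u) where
  wedge : S → S → S
  vee : S → S → S
  diff : S → S → S
  zero : S
  wedge_assoc : ∀ x y z : S, wedge (wedge x y) z = wedge x (wedge y z)
  vee_assoc : ∀ x y z : S, vee (vee x y) z = vee x (vee y z)
  absorb1 : ∀ x y : S, wedge x (vee x y) = x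
  absorb2 : ∀ x y : S, wedge (vee y x) x = x
  absorb3 : ∀ x y : S, vee x (wedge x y) = x
  absorb4 : ∀ x y : S, vee (wedge y x) x = x
  sdistrib1 : ∀ x y z : S, wedge x (vee y z) = vee (wedge x y) (wedge x z)
  sdistrib2 : ∀ x y z : S, wedge (vee x y) z = vee (wedge x z) (wedge y z)
  zero_wedge : ∀ x : S, wedge zero x = zero
  wedge_zero : ∀ x : S, wedge x zero = zero
  zero_vee : ∀ x : S, vee zero x = x
  vee_zero : ∀ x : S, vee x zero = x
  diff_ax1 : ∀ x y : S, vee (wedge (wedge x y) x) (diff x y) = x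
  diff_ax2 : ∀ x y : S, wedge (wedge (wedge x y) x) (diff x y) = zero
  diff_ax3 : ∀ x y : S, wedge (diff x y) (wedge (wedge x y) x) = zero

namespace SBA

scoped infixl:70 " ⋏ " => SBA.wedge
scoped infixl:65 " ⋎ " => SBA.vee
scoped infixl:70 " ∖ " => SBA.diff

variable {S : Type u} [SBA S]

/-- Green's relation `D`: `x D y` iff `x⋏y⋏x = x` and `y⋏x⋏y = y`. -/
def Drel (x y : S) : Prop := x ⋏ y ⋏ x = x ∧ y ⋏ x ⋏ y = y

/-- The natural partial order: `x ≤ y` iff `x⋏y = x = y⋏x`. -/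
def nle (x y : S) : Prop := x ⋏ y = x ∧ y ⋏ x = x

/-- An atom: a nonzero element with nothing strictly between it and `0`. -/
def IsAtom (a : S) : Prop := a ≠ zero ∧ ∀ x : S, nle x a → x = zero ∨ x = a

/-- `X` generates `S`: the only subset of `S` containing `X` and `0` and closed
under the three operations is `S` itself. -/
def Generates (X : Set S) : Prop :=
  ∀ T : Set S, X ⊆ T → zero ∈ T →
    (∀ a b : S, a ∈ T → b ∈ T → a ⋏ b ∈ T ∧ a ⋎ b ∈ T ∧ a ∖ b ∈ T) →
    T = Set.univ

/-- A homomorphism of skew Boolean algebras. -/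
def IsHom {T : Type u} [SBA T] (f : S → T) : Prop :=
  (∀ a b : S, f (a ⋏ b) = f a ⋏ f b) ∧ (∀ a b : S, f (a ⋎ b) = f a ⋎ f b) ∧
    (∀ a b : S, f (a ∖ b) = f a ∖ f b) ∧ f zero = zero

end SBA

open SBA

/-- A left-handed skew Boolean algebra. -/
class LeftHanded (S : Type u) [SBA S] : Prop where
  lh_wedge : ∀ x y : S, x ⋏ y ⋏ x = x ⋏ y
  lh_vee : ∀ x y : S, x ⋎ y ⋎ x = y ⋎ x

/-- `S` is freely generated by `X` over the variety of all skew Boolean algebras. -/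
def FreelyGenerates (S : Type u) [SBA S] (X : Set S) : Prop :=
  Generates X ∧
    ∀ (T : Type u) [SBA T], ∀ g : X → T,
      ∃ f : S → T, IsHom f ∧ ∀ x : X, f x = g x

/-- `S` is freely generated by `X` over the variety of left-handed skew Boolean algebras. -/
def LFreelyGenerates (S : Type u) [SBA S] [LeftHanded S] (X : Set S) : Prop :=
  Generates X ∧
    ∀ (T : Type u) [SBA T] [LeftHanded T], ∀ g : X → T,
      ∃ f : S → T, IsHom f ∧ ∀ x : X, f x = g x

namespace SBA

variable {S : Type u} [SBA S]

theorem wedge_idem (x : S) : x ⋏ x = x := by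
  have h := absorb1 x (x ⋏ x)
  rw [absorb3] at h; exact h

theorem vee_idem (x : S) : x ⋎ x = x := by
  have h := absorb3 x (x ⋎ x)
  rw [absorb1] at h; exact h

theorem zero_join {x y : S} (h : x ⋎ y = zero) : x = zero ∧ y = zero := by
  constructor
  · have := absorb1 x y; rw [h, wedge_zero] at this; exact this.symm
  · have := absorb2 y x; rw [h, zero_wedge] at this; exact this.symm

theorem nle_refl (x : S) : nle x x := ⟨wedge_idem x, wedge_idem x⟩

theorem nle_zero (e : S) : nle zero e := ⟨zero_wedge e, wedge_zero e⟩

theorem nle_trans {a b c : S} (h1 : nle a b) (h2 : nle b c) : nle a c := by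
  constructor
  · rw [← h1.1, wedge_assoc, h2.1, h1.1]
  · rw [← h1.2, ← wedge_assoc, h2.2, h1.2]

theorem nle_wedge {p q e : S} (hp : nle p e) (hq : nle q e) : nle (p ⋏ q) e :=
  ⟨by rw [wedge_assoc, hq.1], by rw [← wedge_assoc, hp.2]⟩

theorem nle_vee {p q e : S} (hp : nle p e) (hq : nle q e) : nle (p ⋎ q) e :=
  ⟨by rw [sdistrib2, hp.1, hq.1], by rw [sdistrib1, hp.2, hq.2]⟩

theorem nle_wedge_left (x y : S) : (x ⋏ y) ⋏ y = x ⋏ y := by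
  rw [wedge_assoc, wedge_idem]

theorem nle_sandwich (e u : S) : nle (e ⋏ u ⋏ e) e := by
  constructor
  · rw [wedge_assoc (e ⋏ u) e e, wedge_idem]
  · calc e ⋏ (e ⋏ u ⋏ e) = (e ⋏ e) ⋏ u ⋏ e := by simp only [wedge_assoc]
      _ = e ⋏ u ⋏ e := by rw [wedge_idem]

/-- The sandwich `x⋏y⋏x` equals `x` when `nle y x`. -/
theorem sandwich_of_nle {a e : S} (h : nle a e) : e ⋏ a ⋏ e = a := by
  rw [h.2, h.1]

theorem diff_nle (x y : S) : nle (x ∖ y) x := by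
  have h := diff_ax1 x y
  constructor
  · calc (x ∖ y) ⋏ x = (x ∖ y) ⋏ (x ⋏ y ⋏ x ⋎ x ∖ y) := by rw [h]
      _ = ((x ∖ y) ⋏ (x ⋏ y ⋏ x)) ⋎ ((x ∖ y) ⋏ (x ∖ y)) := sdistrib1 _ _ _
      _ = zero ⋎ (x ∖ y) := by rw [diff_ax3, wedge_idem]
      _ = x ∖ y := zero_vee _
  · calc x ⋏ (x ∖ y) = (x ⋏ y ⋏ x ⋎ x ∖ y) ⋏ (x ∖ y) := by rw [h]
      _ = x ∖ y := absorb2 _ _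

theorem sdiff_of_bot {x y : S} (h : x ⋏ y ⋏ x = zero) : x ∖ y = x := by
  have h1 := diff_ax1 x y
  rw [h, zero_vee] at h1; exact h1

theorem sdiff_of_top {x y : S} (h : x ⋏ y ⋏ x = x) : x ∖ y = zero := by
  have h1 := diff_ax1 x y
  have h2 := diff_ax2 x y
  rw [h] at h1 h2
  have := absorb2 (x ∖ y) x
  rw [h1, h2] at this; exact this.symm

theorem zero_diff (y : S) : (zero : S) ∖ y = zero :=
  sdiff_of_bot (by rw [zero_wedge, zero_wedge])

theorem diff_zero (x : S) : x ∖ (zero : S) = x :=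
  sdiff_of_bot (by rw [wedge_zero, zero_wedge])

theorem diff_sandwich_zero (x y : S) : (x ∖ y) ⋏ y ⋏ (x ∖ y) = zero := by
  calc (x ∖ y) ⋏ y ⋏ (x ∖ y)
      = ((x ∖ y) ⋏ x) ⋏ y ⋏ (x ⋏ (x ∖ y)) := by rw [(diff_nle x y).1, (diff_nle x y).2]
    _ = ((x ∖ y) ⋏ (x ⋏ y ⋏ x)) ⋏ (x ∖ y) := by simp only [wedge_assoc]
    _ = zero := by rw [diff_ax3, zero_wedge]

theorem diff_kill_r (x y : S) : (x ∖ y) ⋏ y = zero := by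
  calc (x ∖ y) ⋏ y = ((x ∖ y) ⋏ y) ⋏ ((x ∖ y) ⋏ y) := (wedge_idem _).symm
    _ = ((x ∖ y) ⋏ y ⋏ (x ∖ y)) ⋏ y := by simp only [wedge_assoc]
    _ = zero := by rw [diff_sandwich_zero, zero_wedge]

theorem diff_kill_l (x y : S) : y ⋏ (x ∖ y) = zero := by
  calc y ⋏ (x ∖ y) = (y ⋏ (x ∖ y)) ⋏ (y ⋏ (x ∖ y)) := (wedge_idem _).symm
    _ = y ⋏ ((x ∖ y) ⋏ y ⋏ (x ∖ y)) := by simp only [wedge_assoc]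
    _ = zero := by rw [diff_sandwich_zero, wedge_zero]

theorem compl_join {a e : S} (h : nle a e) : a ⋎ (e ∖ a) = e := by
  have := diff_ax1 e a; rwa [sandwich_of_nle h] at this

theorem compl_disj1 {a e : S} (h : nle a e) : a ⋏ (e ∖ a) = zero := by
  have := diff_ax2 e a; rwa [sandwich_of_nle h] at this

theorem compl_disj2 {a e : S} (h : nle a e) : (e ∖ a) ⋏ a = zero := by
  have := diff_ax3 e a; rwa [sandwich_of_nle h] at this

/-- Key cancellation: `L`-related elements below a common bound are equal. -/
theorem dL {a b e : S} (ha : nle a e) (hb : nle b e)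
    (h1 : a ⋏ b = a) (h2 : b ⋏ a = b) : a = b := by
  have hc1 : a ⋎ (e ∖ a) = e := compl_join ha
  have hc2 : a ⋏ (e ∖ a) = zero := compl_disj1 ha
  have hbt : b = a ⋎ ((e ∖ a) ⋏ b) := by
    calc b = e ⋏ b := hb.2.symm
      _ = (a ⋎ (e ∖ a)) ⋏ b := by rw [hc1]
      _ = (a ⋏ b) ⋎ ((e ∖ a) ⋏ b) := sdistrib2 _ _ _
      _ = a ⋎ ((e ∖ a) ⋏ b) := by rw [h1]
  have hta : ((e ∖ a) ⋏ b) ⋏ a = (e ∖ a) ⋏ b := by rw [wedge_assoc, h2]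
  have hat : a ⋏ ((e ∖ a) ⋏ b) = zero := by rw [← wedge_assoc, hc2, zero_wedge]
  have htle : nle ((e ∖ a) ⋏ b) e := nle_wedge (diff_nle e a) hb
  have hs1 : ((e ∖ a) ⋏ b) ⋎ (e ∖ ((e ∖ a) ⋏ b)) = e := compl_join htle
  have hast : a = ((e ∖ a) ⋏ b) ⋎ ((e ∖ ((e ∖ a) ⋏ b)) ⋏ a) := by
    calc a = e ⋏ a := ha.2.symm
      _ = (((e ∖ a) ⋏ b) ⋎ (e ∖ ((e ∖ a) ⋏ b))) ⋏ a := by rw [hs1]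
      _ = (((e ∖ a) ⋏ b) ⋏ a) ⋎ ((e ∖ ((e ∖ a) ⋏ b)) ⋏ a) := sdistrib2 _ _ _
      _ = ((e ∖ a) ⋏ b) ⋎ ((e ∖ ((e ∖ a) ⋏ b)) ⋏ a) := by rw [hta]
  have hzero : (e ∖ a) ⋏ b = zero := by
    have h5 : a ⋏ ((e ∖ a) ⋏ b) = (e ∖ a) ⋏ b := by
      calc a ⋏ ((e ∖ a) ⋏ b)
          = (((e ∖ a) ⋏ b) ⋎ ((e ∖ ((e ∖ a) ⋏ b)) ⋏ a)) ⋏ ((e ∖ a) ⋏ b) := by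
            rw [← hast]
        _ = (((e ∖ a) ⋏ b) ⋏ ((e ∖ a) ⋏ b)) ⋎
              (((e ∖ ((e ∖ a) ⋏ b)) ⋏ a) ⋏ ((e ∖ a) ⋏ b)) := sdistrib2 _ _ _
        _ = ((e ∖ a) ⋏ b) ⋎ ((e ∖ ((e ∖ a) ⋏ b)) ⋏ (a ⋏ ((e ∖ a) ⋏ b))) := by
            rw [wedge_idem, wedge_assoc]
        _ = ((e ∖ a) ⋏ b) ⋎ ((e ∖ ((e ∖ a) ⋏ b)) ⋏ zero) := by rw [hat]
        _ = (e ∖ a) ⋏ b := by rw [wedge_zero, vee_zero]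
    rw [hat] at h5; exact h5.symm
  rw [hbt, hzero, vee_zero]

/-- Key cancellation: `R`-related elements below a common bound are equal. -/
theorem dR {a b e : S} (ha : nle a e) (hb : nle b e)
    (h1 : a ⋏ b = b) (h2 : b ⋏ a = a) : a = b := by
  have hc1 : a ⋎ (e ∖ a) = e := compl_join ha
  have hc3 : (e ∖ a) ⋏ a = zero := compl_disj2 ha
  have hbt : b = a ⋎ (b ⋏ (e ∖ a)) := by
    calc b = b ⋏ e := hb.1.symm
      _ = b ⋏ (a ⋎ (e ∖ a)) := by rw [hc1]
      _ = (b ⋏ a) ⋎ (b ⋏ (e ∖ a)) := sdistrib1 _ _ _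
      _ = a ⋎ (b ⋏ (e ∖ a)) := by rw [h2]
  have hta : (b ⋏ (e ∖ a)) ⋏ a = zero := by rw [wedge_assoc, hc3, wedge_zero]
  have hat : a ⋏ (b ⋏ (e ∖ a)) = b ⋏ (e ∖ a) := by rw [← wedge_assoc, h1]
  have htle : nle (b ⋏ (e ∖ a)) e := nle_wedge hb (diff_nle e a)
  have hs1 : (b ⋏ (e ∖ a)) ⋎ (e ∖ (b ⋏ (e ∖ a))) = e := compl_join htle
  have hast : a = (b ⋏ (e ∖ a)) ⋎ (a ⋏ (e ∖ (b ⋏ (e ∖ a)))) := by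
    calc a = a ⋏ e := ha.1.symm
      _ = a ⋏ ((b ⋏ (e ∖ a)) ⋎ (e ∖ (b ⋏ (e ∖ a)))) := by rw [hs1]
      _ = (a ⋏ (b ⋏ (e ∖ a))) ⋎ (a ⋏ (e ∖ (b ⋏ (e ∖ a)))) := sdistrib1 _ _ _
      _ = (b ⋏ (e ∖ a)) ⋎ (a ⋏ (e ∖ (b ⋏ (e ∖ a)))) := by rw [hat]
  have hzero : b ⋏ (e ∖ a) = zero := by
    have h5 : (b ⋏ (e ∖ a)) ⋏ a = b ⋏ (e ∖ a) := by
      calc (b ⋏ (e ∖ a)) ⋏ a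
          = (b ⋏ (e ∖ a)) ⋏ ((b ⋏ (e ∖ a)) ⋎ (a ⋏ (e ∖ (b ⋏ (e ∖ a))))) := by
            rw [← hast]
        _ = ((b ⋏ (e ∖ a)) ⋏ (b ⋏ (e ∖ a))) ⋎
              ((b ⋏ (e ∖ a)) ⋏ (a ⋏ (e ∖ (b ⋏ (e ∖ a))))) := sdistrib1 _ _ _
        _ = (b ⋏ (e ∖ a)) ⋎ (((b ⋏ (e ∖ a)) ⋏ a) ⋏ (e ∖ (b ⋏ (e ∖ a)))) := by
            rw [wedge_idem]; simp only [wedge_assoc]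
        _ = (b ⋏ (e ∖ a)) ⋎ (zero ⋏ (e ∖ (b ⋏ (e ∖ a)))) := by rw [hta]
        _ = b ⋏ (e ∖ a) := by rw [zero_wedge, vee_zero]
    rw [hta] at h5; exact h5.symm
  rw [hbt, hzero, vee_zero]

/-- Elements below a common bound commute under `⋏`. -/
theorem comm0 {p q e : S} (hp : nle p e) (hq : nle q e) : p ⋏ q = q ⋏ p := by
  have key : ∀ a b : S, nle a e → nle b e → a ⋏ b = b ⋏ (a ⋏ b) := by
    intro a b hae hbe
    have h1 : (a ⋏ b) ⋏ (b ⋏ (a ⋏ b)) = a ⋏ b := by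
      calc (a ⋏ b) ⋏ (b ⋏ (a ⋏ b)) = ((a ⋏ b) ⋏ b) ⋏ (a ⋏ b) := by
            simp only [wedge_assoc]
        _ = (a ⋏ b) ⋏ (a ⋏ b) := by rw [nle_wedge_left]
        _ = a ⋏ b := wedge_idem _
    have h2 : (b ⋏ (a ⋏ b)) ⋏ (a ⋏ b) = b ⋏ (a ⋏ b) := by
      calc (b ⋏ (a ⋏ b)) ⋏ (a ⋏ b) = b ⋏ ((a ⋏ b) ⋏ (a ⋏ b)) := wedge_assoc _ _ _
        _ = b ⋏ (a ⋏ b) := by rw [wedge_idem]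
    exact dL (nle_wedge hae hbe) (nle_wedge hbe (nle_wedge hae hbe)) h1 h2
  have e1 : p ⋏ q = q ⋏ (p ⋏ q) := key p q hp hq
  have e2 : q ⋏ p = p ⋏ (q ⋏ p) := key q p hq hp
  refine (dR (nle_wedge hq hp) (nle_wedge hp hq) ?_ ?_).symm
  · calc (q ⋏ p) ⋏ (p ⋏ q) = q ⋏ ((p ⋏ p) ⋏ q) := by simp only [wedge_assoc]
      _ = q ⋏ (p ⋏ q) := by rw [wedge_idem]
      _ = p ⋏ q := e1.symm
  · calc (p ⋏ q) ⋏ (q ⋏ p) = p ⋏ ((q ⋏ q) ⋏ p) := by simp only [wedge_assoc]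
      _ = p ⋏ (q ⋏ p) := by rw [wedge_idem]
      _ = q ⋏ p := e2.symm

/-- Elements below a common bound commute under `⋎`. -/
theorem vcomm0 {p q e : S} (hp : nle p e) (hq : nle q e) : p ⋎ q = q ⋎ p := by
  refine dL (nle_vee hp hq) (nle_vee hq hp) ?_ ?_
  · calc (p ⋎ q) ⋏ (q ⋎ p) = (p ⋏ (q ⋎ p)) ⋎ (q ⋏ (q ⋎ p)) := sdistrib2 _ _ _
      _ = ((p ⋏ q) ⋎ (p ⋏ p)) ⋎ q := by rw [sdistrib1, absorb1]
      _ = ((q ⋏ p) ⋎ p) ⋎ q := by rw [wedge_idem, comm0 hp hq]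
      _ = p ⋎ q := by rw [absorb4]
  · calc (q ⋎ p) ⋏ (p ⋎ q) = (q ⋏ (p ⋎ q)) ⋎ (p ⋏ (p ⋎ q)) := sdistrib2 _ _ _
      _ = ((q ⋏ p) ⋎ (q ⋏ q)) ⋎ p := by rw [sdistrib1, absorb1]
      _ = ((p ⋏ q) ⋎ q) ⋎ p := by rw [wedge_idem, comm0 hq hp]
      _ = q ⋎ p := by rw [absorb4]

/-- The middle-insertion identity. -/
theorem insert_mid (x y z : S) : x ⋏ y ⋏ z ⋏ x = x ⋏ y ⋏ x ⋏ z ⋏ x := by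
  have hPx : nle (x ⋏ y ⋏ z ⋏ x) x := by
    constructor
    · rw [wedge_assoc (x ⋏ y ⋏ z) x x, wedge_idem]
    · calc x ⋏ (x ⋏ y ⋏ z ⋏ x) = (x ⋏ x) ⋏ y ⋏ z ⋏ x := by simp only [wedge_assoc]
        _ = x ⋏ y ⋏ z ⋏ x := by rw [wedge_idem]
  have hAx : nle (x ⋏ y ⋏ x) x := nle_sandwich x y
  have hCx : nle (x ⋏ z ⋏ x) x := nle_sandwich x z
  have hPPQ : x ⋏ y ⋏ z ⋏ x = (x ⋏ y ⋏ z ⋏ x) ⋎ (x ⋏ y ⋏ x ⋏ z ⋏ x) := by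
    calc x ⋏ y ⋏ z ⋏ x = (x ⋏ (y ⋎ y ⋏ x)) ⋏ z ⋏ x := by rw [absorb3]
      _ = ((x ⋏ y ⋎ x ⋏ (y ⋏ x))) ⋏ z ⋏ x := by rw [sdistrib1]
      _ = ((x ⋏ y) ⋏ z ⋎ (x ⋏ (y ⋏ x)) ⋏ z) ⋏ x := by rw [sdistrib2]
      _ = ((x ⋏ y) ⋏ z) ⋏ x ⋎ ((x ⋏ (y ⋏ x)) ⋏ z) ⋏ x := by rw [sdistrib2]
      _ = (x ⋏ y ⋏ z ⋏ x) ⋎ (x ⋏ y ⋏ x ⋏ z ⋏ x) := by simp only [wedge_assoc]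
  have hPQP : x ⋏ y ⋏ z ⋏ x = (x ⋏ y ⋏ x ⋏ z ⋏ x) ⋎ (x ⋏ y ⋏ z ⋏ x) := by
    calc x ⋏ y ⋏ z ⋏ x = (x ⋏ y) ⋏ (z ⋏ x) := wedge_assoc _ _ _
      _ = (x ⋏ y) ⋏ (((x ⋏ z) ⋎ z) ⋏ x) := by rw [absorb4]
      _ = (x ⋏ y) ⋏ (((x ⋏ z) ⋏ x) ⋎ (z ⋏ x)) := by rw [sdistrib2]
      _ = ((x ⋏ y) ⋏ ((x ⋏ z) ⋏ x)) ⋎ ((x ⋏ y) ⋏ (z ⋏ x)) := sdistrib1 _ _ _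
      _ = (x ⋏ y ⋏ x ⋏ z ⋏ x) ⋎ (x ⋏ y ⋏ z ⋏ x) := by simp only [wedge_assoc]
  have hPQ : (x ⋏ y ⋏ z ⋏ x) ⋏ (x ⋏ y ⋏ x ⋏ z ⋏ x) = x ⋏ y ⋏ x ⋏ z ⋏ x := by
    have := absorb2 (x ⋏ y ⋏ x ⋏ z ⋏ x) (x ⋏ y ⋏ z ⋏ x)
    rwa [← hPPQ] at this
  have hQP : (x ⋏ y ⋏ x ⋏ z ⋏ x) ⋏ (x ⋏ y ⋏ z ⋏ x) = x ⋏ y ⋏ x ⋏ z ⋏ x := by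
    have := absorb1 (x ⋏ y ⋏ x ⋏ z ⋏ x) (x ⋏ y ⋏ z ⋏ x)
    rwa [← hPQP] at this
  have hAP : (x ⋏ y ⋏ x) ⋏ (x ⋏ y ⋏ z ⋏ x) = x ⋏ y ⋏ z ⋏ x := by
    calc (x ⋏ y ⋏ x) ⋏ (x ⋏ y ⋏ z ⋏ x)
        = ((x ⋏ y) ⋏ ((x ⋏ x) ⋏ y)) ⋏ (z ⋏ x) := by simp only [wedge_assoc]
      _ = ((x ⋏ y) ⋏ (x ⋏ y)) ⋏ (z ⋏ x) := by rw [wedge_idem]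
      _ = (x ⋏ y) ⋏ (z ⋏ x) := by rw [wedge_idem]
      _ = x ⋏ y ⋏ z ⋏ x := by simp only [wedge_assoc]
  have hPA : (x ⋏ y ⋏ z ⋏ x) ⋏ (x ⋏ y ⋏ x) = x ⋏ y ⋏ z ⋏ x := by
    rw [comm0 hPx hAx, hAP]
  have hPC : (x ⋏ y ⋏ z ⋏ x) ⋏ (x ⋏ z ⋏ x) = x ⋏ y ⋏ z ⋏ x := by
    calc (x ⋏ y ⋏ z ⋏ x) ⋏ (x ⋏ z ⋏ x)
        = (x ⋏ y) ⋏ ((z ⋏ (x ⋏ x)) ⋏ (z ⋏ x)) := by simp only [wedge_assoc]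
      _ = (x ⋏ y) ⋏ ((z ⋏ x) ⋏ (z ⋏ x)) := by rw [wedge_idem]
      _ = (x ⋏ y) ⋏ (z ⋏ x) := by rw [wedge_idem]
      _ = x ⋏ y ⋏ z ⋏ x := by simp only [wedge_assoc]
  have hACQ : (x ⋏ y ⋏ x) ⋏ (x ⋏ z ⋏ x) = x ⋏ y ⋏ x ⋏ z ⋏ x := by
    calc (x ⋏ y ⋏ x) ⋏ (x ⋏ z ⋏ x)
        = (x ⋏ y) ⋏ ((x ⋏ x) ⋏ (z ⋏ x)) := by simp only [wedge_assoc]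
      _ = (x ⋏ y) ⋏ (x ⋏ (z ⋏ x)) := by rw [wedge_idem]
      _ = x ⋏ y ⋏ x ⋏ z ⋏ x := by simp only [wedge_assoc]
  have hfin : (x ⋏ y ⋏ z ⋏ x) ⋏ (x ⋏ y ⋏ x ⋏ z ⋏ x) = x ⋏ y ⋏ z ⋏ x := by
    rw [← hACQ, ← wedge_assoc, hPA, hPC]
  rw [← hfin, hPQ]

/-- Normality. -/
theorem normal (x y z : S) : x ⋏ y ⋏ z ⋏ x = x ⋏ z ⋏ y ⋏ x := by
  have h1 : x ⋏ y ⋏ z ⋏ x = (x ⋏ y ⋏ x) ⋏ (x ⋏ z ⋏ x) := by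
    rw [insert_mid]
    calc x ⋏ y ⋏ x ⋏ z ⋏ x = (x ⋏ y) ⋏ ((x ⋏ x) ⋏ (z ⋏ x)) := by
          rw [wedge_idem]; simp only [wedge_assoc]
      _ = (x ⋏ y ⋏ x) ⋏ (x ⋏ z ⋏ x) := by simp only [wedge_assoc]
  have h2 : x ⋏ z ⋏ y ⋏ x = (x ⋏ z ⋏ x) ⋏ (x ⋏ y ⋏ x) := by
    rw [insert_mid]
    calc x ⋏ z ⋏ x ⋏ y ⋏ x = (x ⋏ z) ⋏ ((x ⋏ x) ⋏ (y ⋏ x)) := by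
          rw [wedge_idem]; simp only [wedge_assoc]
      _ = (x ⋏ z ⋏ x) ⋏ (x ⋏ y ⋏ x) := by simp only [wedge_assoc]
  rw [h1, h2, comm0 (nle_sandwich x y) (nle_sandwich x z)]

end SBA
namespace SBA

variable {S : Type u} [SBA S]

/-- For `D`-related elements, the join is the reversed meet. -/
theorem djoin {x y : S} (hx : x ⋏ y ⋏ x = x) (hy : y ⋏ x ⋏ y = y) :
    x ⋎ y = y ⋏ x := by
  have hxyx : x ⋏ (y ⋏ x) = x := by rw [← wedge_assoc]; exact hx
  have hxvyx : x ⋎ (y ⋏ x) = y ⋏ x := by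
    have := absorb4 (y ⋏ x) x
    rwa [hxyx] at this
  have hyxvy : (y ⋏ x) ⋎ y = y ⋏ x := by
    have := absorb3 (y ⋏ x) y
    rwa [hy] at this
  have st : (y ⋏ x) ⋏ (x ⋎ y) = y ⋏ x := by
    calc (y ⋏ x) ⋏ (x ⋎ y) = ((y ⋏ x) ⋏ x) ⋎ ((y ⋏ x) ⋏ y) := sdistrib1 _ _ _
      _ = (y ⋏ x) ⋎ y := by rw [wedge_assoc, wedge_idem, hy]
      _ = y ⋏ x := hyxvy
  have ts : (x ⋎ y) ⋏ (y ⋏ x) = y ⋏ x := by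
    calc (x ⋎ y) ⋏ (y ⋏ x) = (x ⋏ (y ⋏ x)) ⋎ (y ⋏ (y ⋏ x)) := sdistrib2 _ _ _
      _ = x ⋎ (y ⋏ x) := by rw [hxyx, ← wedge_assoc, wedge_idem]
      _ = y ⋏ x := hxvyx
  have hts' : (x ⋎ y) ⋏ (y ⋏ x) ⋏ (x ⋎ y) = y ⋏ x := by rw [ts, st]
  have hr1 := diff_ax1 (x ⋎ y) (y ⋏ x)
  have hr3 := diff_ax3 (x ⋎ y) (y ⋏ x)
  rw [hts'] at hr1 hr3
  have htx : (x ⋎ y) ⋏ x = y ⋏ x := by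
    calc (x ⋎ y) ⋏ x = (x ⋏ x) ⋎ (y ⋏ x) := sdistrib2 _ _ _
      _ = x ⋎ (y ⋏ x) := by rw [wedge_idem]
      _ = y ⋏ x := hxvyx
  have hrx : ((x ⋎ y) ∖ (y ⋏ x)) ⋏ x = zero := by
    calc ((x ⋎ y) ∖ (y ⋏ x)) ⋏ x
        = (((x ⋎ y) ∖ (y ⋏ x)) ⋏ (x ⋎ y)) ⋏ x := by rw [(diff_nle _ _).1]
      _ = ((x ⋎ y) ∖ (y ⋏ x)) ⋏ ((x ⋎ y) ⋏ x) := wedge_assoc _ _ _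
      _ = ((x ⋎ y) ∖ (y ⋏ x)) ⋏ (y ⋏ x) := by rw [htx]
      _ = zero := hr3
  have hry : ((x ⋎ y) ∖ (y ⋏ x)) ⋏ y = zero := by
    calc ((x ⋎ y) ∖ (y ⋏ x)) ⋏ y
        = ((x ⋎ y) ∖ (y ⋏ x)) ⋏ ((y ⋏ x) ⋏ y) := by rw [hy]
      _ = (((x ⋎ y) ∖ (y ⋏ x)) ⋏ (y ⋏ x)) ⋏ y := (wedge_assoc _ _ _).symm
      _ = zero := by rw [hr3, zero_wedge]
  have hr0 : (x ⋎ y) ∖ (y ⋏ x) = zero := by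
    calc (x ⋎ y) ∖ (y ⋏ x) = ((x ⋎ y) ∖ (y ⋏ x)) ⋏ (x ⋎ y) := ((diff_nle _ _).1).symm
      _ = (((x ⋎ y) ∖ (y ⋏ x)) ⋏ x) ⋎ (((x ⋎ y) ∖ (y ⋏ x)) ⋏ y) := sdistrib1 _ _ _
      _ = zero := by rw [hrx, hry, vee_zero]
  rw [hr0, vee_zero] at hr1
  exact hr1.symm

/-- Orthogonal elements have commuting joins. -/
theorem orth_vee_comm {x y : S} (h1 : x ⋏ y = zero) (h2 : y ⋏ x = zero) :
    x ⋎ y = y ⋎ x := by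
  have hxc : nle x ((x ⋎ y) ⋎ x) := by
    constructor
    · calc x ⋏ ((x ⋎ y) ⋎ x) = (x ⋏ (x ⋎ y)) ⋎ (x ⋏ x) := sdistrib1 _ _ _
        _ = x ⋎ x := by rw [absorb1, wedge_idem]
        _ = x := vee_idem x
    · calc ((x ⋎ y) ⋎ x) ⋏ x = ((x ⋏ x) ⋎ (y ⋏ x)) ⋎ (x ⋏ x) := by
            rw [sdistrib2, sdistrib2]
        _ = (x ⋎ zero) ⋎ x := by rw [wedge_idem, h2]
        _ = x := by rw [vee_zero, vee_idem]
  have hyc : nle y ((x ⋎ y) ⋎ x) := by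
    constructor
    · calc y ⋏ ((x ⋎ y) ⋎ x) = ((y ⋏ x) ⋎ (y ⋏ y)) ⋎ (y ⋏ x) := by
            rw [sdistrib1, sdistrib1]
        _ = (zero ⋎ y) ⋎ zero := by rw [h2, wedge_idem]
        _ = y := by rw [zero_vee, vee_zero]
    · calc ((x ⋎ y) ⋎ x) ⋏ y = ((x ⋏ y) ⋎ (y ⋏ y)) ⋎ (x ⋏ y) := by
            rw [sdistrib2, sdistrib2]
        _ = (zero ⋎ y) ⋎ zero := by rw [h1, wedge_idem]
        _ = y := by rw [zero_vee, vee_zero]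
  have hab : (x ⋎ y) ⋏ (y ⋎ x) = x ⋎ y := by
    calc (x ⋎ y) ⋏ (y ⋎ x) = (x ⋏ (y ⋎ x)) ⋎ (y ⋏ (y ⋎ x)) := sdistrib2 _ _ _
      _ = ((x ⋏ y) ⋎ (x ⋏ x)) ⋎ y := by rw [sdistrib1, absorb1]
      _ = (zero ⋎ x) ⋎ y := by rw [h1, wedge_idem]
      _ = x ⋎ y := by rw [zero_vee]
  have hba : (y ⋎ x) ⋏ (x ⋎ y) = y ⋎ x := by
    calc (y ⋎ x) ⋏ (x ⋎ y) = (y ⋏ (x ⋎ y)) ⋎ (x ⋏ (x ⋎ y)) := sdistrib2 _ _ _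
      _ = ((y ⋏ x) ⋎ (y ⋏ y)) ⋎ x := by rw [sdistrib1, absorb1]
      _ = (zero ⋎ y) ⋎ x := by rw [h2, wedge_idem]
      _ = y ⋎ x := by rw [zero_vee]
  exact dL (nle_vee hxc hyc) (nle_vee hyc hxc) hab hba

/-- Complements are unique. -/
theorem compl_unique {e w u v : S} (hu : nle u e) (hv : nle v e)
    (huw : u ⋏ w = zero) (hvw : v ⋏ w = zero)
    (hju : w ⋎ u = e) (hjv : w ⋎ v = e) : u = v := by
  have h1 : u = u ⋏ v := by
    calc u = u ⋏ e := hu.1.symm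
      _ = u ⋏ (w ⋎ v) := by rw [hjv]
      _ = (u ⋏ w) ⋎ (u ⋏ v) := sdistrib1 _ _ _
      _ = u ⋏ v := by rw [huw, zero_vee]
  have h2 : v = v ⋏ u := by
    calc v = v ⋏ e := hv.1.symm
      _ = v ⋏ (w ⋎ u) := by rw [hju]
      _ = (v ⋏ w) ⋎ (v ⋏ u) := sdistrib1 _ _ _
      _ = v ⋏ u := by rw [hvw, zero_vee]
  rw [h1, comm0 hu hv, ← h2]

/-- Characterisation of the difference. -/
theorem diff_char {x y z : S} (hz : nle z x) (h1 : z ⋏ (x ⋏ y ⋏ x) = zero)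
    (h3 : (x ⋏ y ⋏ x) ⋎ z = x) : x ∖ y = z :=
  compl_unique (diff_nle x y) hz (diff_ax3 x y) h1 (diff_ax1 x y) h3

theorem orth_mono {p a q b : S} (hp : nle p a) (hq : nle q b)
    (h : a ⋏ b = zero) : p ⋏ q = zero := by
  calc p ⋏ q = (p ⋏ a) ⋏ (b ⋏ q) := by rw [hp.1, hq.2]
    _ = p ⋏ ((a ⋏ b) ⋏ q) := by simp only [wedge_assoc]
    _ = zero := by rw [h, zero_wedge, wedge_zero]

/-! ### Lists of meets and joins -/

def mList : List S → S
  | [] => zero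
  | [a] => a
  | a :: l => a ⋏ mList l

def jList : List S → S
  | [] => zero
  | a :: l => a ⋎ jList l

@[simp] theorem jList_nil : jList ([] : List S) = zero := rfl

@[simp] theorem jList_cons (a : S) (l : List S) :
    jList (a :: l) = a ⋎ jList l := rfl

@[simp] theorem mList_singleton (a : S) : mList [a] = a := rfl

theorem mList_cons {l : List S} (a : S) (h : l ≠ []) :
    mList (a :: l) = a ⋏ mList l := by
  cases l with
  | nil => exact absurd rfl h
  | cons b m => rfl

theorem mList_append {l₁ l₂ : List S} (h₁ : l₁ ≠ []) (h₂ : l₂ ≠ []) :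
    mList (l₁ ++ l₂) = mList l₁ ⋏ mList l₂ := by
  induction l₁ with
  | nil => exact absurd rfl h₁
  | cons a l ih =>
    cases l with
    | nil => simpa using mList_cons a h₂
    | cons b m =>
      have hne : (b :: m : List S) ≠ [] := by simp
      have hne2 : (b :: m ++ l₂ : List S) ≠ [] := by simp
      calc mList (a :: (b :: m) ++ l₂) = a ⋏ mList ((b :: m) ++ l₂) := by
            rw [List.cons_append]; exact mList_cons a (by simp)
        _ = a ⋏ (mList (b :: m) ⋏ mList l₂) := by rw [ih hne]
        _ = (a ⋏ mList (b :: m)) ⋏ mList l₂ := (wedge_assoc _ _ _).symm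
        _ = mList (a :: b :: m) ⋏ mList l₂ := by rw [mList_cons a hne]

theorem jList_append (l₁ l₂ : List S) :
    jList (l₁ ++ l₂) = jList l₁ ⋎ jList l₂ := by
  induction l₁ with
  | nil => rw [List.nil_append, jList_nil, zero_vee]
  | cons a l ih => rw [List.cons_append, jList_cons, jList_cons, ih, vee_assoc]

theorem mList_le {l : List S} {e : S} (h : ∀ a ∈ l, nle a e) (hne : l ≠ []) :
    nle (mList l) e := by
  induction l with
  | nil => exact absurd rfl hne
  | cons a l ih =>
    cases l with
    | nil => exact h a (by simp)
    | cons b m =>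
      rw [mList_cons a (by simp)]
      exact nle_wedge (h a (by simp)) (ih (fun c hc => h c (by simp [hc])) (by simp))

theorem jList_le {l : List S} {e : S} (h : ∀ a ∈ l, nle a e) :
    nle (jList l) e := by
  induction l with
  | nil => exact nle_zero e
  | cons a l ih =>
    exact nle_vee (h a (by simp)) (ih (fun c hc => h c (by simp [hc])))

theorem mList_zero {l : List S} (h : zero ∈ l) : mList l = zero := by
  induction l with
  | nil => simp at h
  | cons a l ih =>
    cases l with
    | nil =>
      have h0 : a = zero := (List.mem_singleton.mp h).symm
      rw [mList_singleton, h0]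
    | cons b m =>
      rw [mList_cons a (by simp)]
      rcases List.mem_cons.mp h with h0 | h0
      · rw [← h0, zero_wedge]
      · rw [ih h0, wedge_zero]

theorem jList_zero {l : List S} (h : ∀ a ∈ l, a = zero) : jList l = zero := by
  induction l with
  | nil => rfl
  | cons a l ih =>
    rw [jList_cons, h a (by simp), ih (fun c hc => h c (by simp [hc])), vee_zero]

theorem orth_jList_r {l : List S} {x : S} (h : ∀ a ∈ l, x ⋏ a = zero) :
    x ⋏ jList l = zero := by
  induction l with
  | nil => exact wedge_zero x
  | cons a l ih =>
    rw [jList_cons, sdistrib1, h a (by simp),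
      ih (fun c hc => h c (by simp [hc])), vee_zero]

theorem orth_jList_l {l : List S} {x : S} (h : ∀ a ∈ l, a ⋏ x = zero) :
    jList l ⋏ x = zero := by
  induction l with
  | nil => exact zero_wedge x
  | cons a l ih =>
    rw [jList_cons, sdistrib2, h a (by simp),
      ih (fun c hc => h c (by simp [hc])), vee_zero]

theorem wedge_jList (x : S) (l : List S) :
    x ⋏ jList l = jList (l.map (fun a => x ⋏ a)) := by
  induction l with
  | nil => simp [wedge_zero]
  | cons a l ih => simp only [jList_cons, List.map_cons, sdistrib1, ih]

theorem jList_wedge (x : S) (l : List S) :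
    jList l ⋏ x = jList (l.map (fun a => a ⋏ x)) := by
  induction l with
  | nil => simp [zero_wedge]
  | cons a l ih => simp only [jList_cons, List.map_cons, sdistrib2, ih]

theorem sand_jList (e : S) (l : List S) :
    (e ⋏ jList l) ⋏ e = jList (l.map (fun a => e ⋏ a ⋏ e)) := by
  rw [wedge_jList, jList_wedge, List.map_map]
  rfl

theorem sand_mList (e : S) {l : List S} (hl : l ≠ []) :
    (e ⋏ mList l) ⋏ e = mList (l.map (fun a => e ⋏ a ⋏ e)) := by
  induction l with
  | nil => exact absurd rfl hl
  | cons a l ih =>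
    cases l with
    | nil => rfl
    | cons b m =>
      have hne : (b :: m : List S) ≠ [] := by simp
      calc (e ⋏ mList (a :: b :: m)) ⋏ e
          = ((e ⋏ a) ⋏ mList (b :: m)) ⋏ e := by
            rw [mList_cons a hne, ← wedge_assoc]
        _ = (((e ⋏ a) ⋏ e) ⋏ mList (b :: m)) ⋏ e := insert_mid e a (mList (b :: m))
        _ = (((e ⋏ a) ⋏ (e ⋏ e)) ⋏ mList (b :: m)) ⋏ e := by rw [wedge_idem]
        _ = ((e ⋏ a) ⋏ e) ⋏ ((e ⋏ mList (b :: m)) ⋏ e) := by simp only [wedge_assoc]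
        _ = (e ⋏ a ⋏ e) ⋏ mList ((b :: m).map (fun c => e ⋏ c ⋏ e)) := by rw [ih hne]
        _ = mList ((a :: b :: m).map (fun c => e ⋏ c ⋏ e)) :=
            (mList_cons _ (by simp)).symm

/-- Sandwich absorption: the meet of a list absorbs its members. -/
theorem mList_absorb {l : List S} {w : S} (hw : w ∈ l) :
    (mList l ⋏ w) ⋏ mList l = mList l := by
  obtain ⟨p, q, rfl⟩ := List.append_of_mem hw
  cases p with
  | nil =>
    cases q with
    | nil =>
      simp only [List.nil_append]
      calc (mList [w] ⋏ w) ⋏ mList [w] = (w ⋏ w) ⋏ w := rfl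
        _ = w := by rw [wedge_idem, wedge_idem]
        _ = mList [w] := rfl
    | cons b m =>
      simp only [List.nil_append]
      rw [mList_cons w (by simp)]
      calc ((w ⋏ mList (b :: m)) ⋏ w) ⋏ (w ⋏ mList (b :: m))
          = (w ⋏ mList (b :: m)) ⋏ ((w ⋏ w) ⋏ mList (b :: m)) := by
            simp only [wedge_assoc]
        _ = (w ⋏ mList (b :: m)) ⋏ (w ⋏ mList (b :: m)) := by rw [wedge_idem]
        _ = w ⋏ mList (b :: m) := wedge_idem _
  | cons a p' =>
    cases q with
    | nil =>
      have h1 : mList (a :: p' ++ [w]) = mList (a :: p') ⋏ w :=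
        mList_append (by simp) (by simp)
      rw [h1]
      calc ((mList (a :: p') ⋏ w) ⋏ w) ⋏ (mList (a :: p') ⋏ w)
          = mList (a :: p') ⋏ ((w ⋏ w) ⋏ (mList (a :: p') ⋏ w)) := by
            simp only [wedge_assoc]
        _ = mList (a :: p') ⋏ (w ⋏ (mList (a :: p') ⋏ w)) := by rw [wedge_idem]
        _ = (mList (a :: p') ⋏ w) ⋏ (mList (a :: p') ⋏ w) := by
            simp only [wedge_assoc]
        _ = mList (a :: p') ⋏ w := wedge_idem _
    | cons b q' =>
      have h1 : mList (a :: p' ++ w :: b :: q')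
          = mList (a :: p') ⋏ (w ⋏ mList (b :: q')) := by
        rw [mList_append (l₁ := a :: p') (by simp) (by simp),
          mList_cons w (by simp)]
      rw [h1]
      -- M = P ⋏ (w ⋏ Q); show (M ⋏ w) ⋏ M = M
      -- M⋏w⋏M = P⋏(w⋏Q⋏w⋏P⋏w)⋏Q and w⋏Q⋏P⋏w = w⋏Q⋏w⋏P⋏w by insert_mid
      have key := insert_mid w (mList (b :: q')) (mList (a :: p'))
      -- key : w ⋏ Q ⋏ P ⋏ w = w ⋏ Q ⋏ w ⋏ P ⋏ w
      calc ((mList (a :: p') ⋏ (w ⋏ mList (b :: q'))) ⋏ w) ⋏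
            (mList (a :: p') ⋏ (w ⋏ mList (b :: q')))
          = mList (a :: p') ⋏
              ((w ⋏ mList (b :: q') ⋏ w ⋏ mList (a :: p') ⋏ w) ⋏ mList (b :: q')) := by
            simp only [wedge_assoc]
        _ = mList (a :: p') ⋏
              ((w ⋏ mList (b :: q') ⋏ mList (a :: p') ⋏ w) ⋏ mList (b :: q')) := by
            rw [key]
        _ = (mList (a :: p') ⋏ (w ⋏ mList (b :: q'))) ⋏
              (mList (a :: p') ⋏ (w ⋏ mList (b :: q'))) := by
            simp only [wedge_assoc]
        _ = mList (a :: p') ⋏ (w ⋏ mList (b :: q')) := wedge_idem _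

/-- Permutation invariance for meets of elements below a common bound. -/
theorem mList_perm {l l' : List S} {e : S} (hp : l.Perm l')
    (hle : ∀ a ∈ l, nle a e) : mList l = mList l' := by
  induction hp with
  | nil => rfl
  | cons a h ih =>
    rename_i l₁ l₂
    cases l₁ with
    | nil =>
      have h2 : l₂ = [] := h.symm.eq_nil
      subst h2; rfl
    | cons b m =>
      have hne2 : l₂ ≠ [] := by
        intro hh; rw [hh] at h; exact absurd h.eq_nil (by simp)
      rw [mList_cons a (by simp), mList_cons a hne2,
        ih (fun c hc => hle c (by simp [hc]))]
  | swap x y l =>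
    cases l with
    | nil =>
      have hx : nle x e := hle x (by simp)
      have hy : nle y e := hle y (by simp)
      show y ⋏ x = x ⋏ y
      exact comm0 (hle y (by simp)) (hle x (by simp))
    | cons b m =>
      have hne : (b :: m : List S) ≠ [] := by simp
      rw [mList_cons y (by simp), mList_cons x hne,
        mList_cons x (by simp), mList_cons y hne,
        ← wedge_assoc, ← wedge_assoc,
        comm0 (hle y (by simp)) (hle x (by simp))]
  | trans h1 h2 ih1 ih2 =>
    rw [ih1 hle, ih2 (fun c hc => hle c (h1.mem_iff.mpr hc))]

/-- Permutation invariance for joins of pairwise commuting elements. -/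
theorem jList_perm {l l' : List S} (hp : l.Perm l')
    (hc : ∀ a ∈ l, ∀ b ∈ l, a ⋎ b = b ⋎ a) : jList l = jList l' := by
  induction hp with
  | nil => rfl
  | cons a h ih =>
    rename_i l₁ l₂
    rw [jList_cons, jList_cons,
      ih (fun c hc' d hd' => hc c (by simp [hc']) d (by simp [hd']))]
  | swap x y l =>
    rw [jList_cons, jList_cons, jList_cons, jList_cons, ← vee_assoc, ← vee_assoc,
      hc y (by simp) x (by simp)]
  | trans h1 h2 ih1 ih2 =>
    rw [ih1 hc, ih2 (fun c hc' d hd' =>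
      hc c (h1.mem_iff.mpr hc') d (h1.mem_iff.mpr hd'))]

end SBA
namespace SBA

variable {S : Type u} [SBA S]

theorem jList_eq_zero {l : List S} (h : jList l = zero) : ∀ a ∈ l, a = zero := by
  induction l with
  | nil => intro a ha; simp at ha
  | cons a l ih =>
    rw [jList_cons] at h
    obtain ⟨h1, h2⟩ := zero_join h
    intro c hc
    rcases List.mem_cons.mp hc with h0 | h0
    · rw [h0]; exact h1
    · exact ih h2 c h0

theorem orth_of_sandwich {x y : S} (h : (x ⋏ y) ⋏ x = zero) :
    x ⋏ y = zero ∧ y ⋏ x = zero := by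
  constructor
  · calc x ⋏ y = ((x ⋏ y) ⋏ x) ⋏ y := by
          rw [wedge_assoc (x ⋏ y) x y, wedge_idem]
      _ = zero := by rw [h, zero_wedge]
  · calc y ⋏ x = (y ⋏ x) ⋏ (y ⋏ x) := (wedge_idem _).symm
      _ = y ⋏ ((x ⋏ y) ⋏ x) := by simp only [wedge_assoc]
      _ = zero := by rw [h, wedge_zero]

theorem mList_pair (a b : S) : mList [a, b] = a ⋏ b := rfl

theorem mList_three (a b c : S) : mList [a, b, c] = a ⋏ (b ⋏ c) := rfl

theorem mList_five (a b c d e : S) :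
    mList [a, b, c, d, e] = a ⋏ (b ⋏ (c ⋏ (d ⋏ e))) := rfl

end SBA
set_option linter.unusedSectionVars false

namespace SBA

variable {T : Type u} [SBA T] {n : ℕ}

/-- The list of generators indexed by a finite set. -/
def genList (v : Fin n → T) (A : Finset (Fin n)) : List T :=
  (A.sort (· ≤ ·)).map v

theorem genList_ne_nil {v : Fin n → T} {A : Finset (Fin n)} (hA : A.Nonempty) :
    genList v A ≠ [] := by
  obtain ⟨a, ha⟩ := hA
  have : v a ∈ genList v A :=
    List.mem_map.mpr ⟨a, (Finset.mem_sort _).mpr ha, rfl⟩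
  intro h; rw [h] at this; simp at this

theorem mem_genList {v : Fin n → T} {A : Finset (Fin n)} {a : Fin n}
    (ha : a ∈ A) : v a ∈ genList v A :=
  List.mem_map.mpr ⟨a, (Finset.mem_sort _).mpr ha, rfl⟩

/-- The meet of all generators in `A`. -/
def mA (v : Fin n → T) (A : Finset (Fin n)) : T := mList (genList v A)

/-- The join of all generators outside `A`. -/
def DA (v : Fin n → T) (A : Finset (Fin n)) : T := jList (genList v Aᶜ)

/-- The "selector" of the component `A`. -/
def sA (v : Fin n → T) (A : Finset (Fin n)) : T := mA v A ∖ DA v A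

/-- The atom term for component `A` with coordinates `a, b`. -/
def Et (v : Fin n → T) (A : Finset (Fin n)) (a b : Fin n) : T :=
  (v a ⋏ sA v A) ⋏ v b

variable {v : Fin n → T} {A B : Finset (Fin n)}

theorem sA_m1 : sA v A ⋏ mA v A = sA v A := (diff_nle _ _).1

theorem sA_m2 : mA v A ⋏ sA v A = sA v A := (diff_nle _ _).2

/-- Sandwiching the selector by a generator in `A` gives back the selector. -/
theorem sv {i : Fin n} (hi : i ∈ A) : (sA v A ⋏ v i) ⋏ sA v A = sA v A := by
  calc (sA v A ⋏ v i) ⋏ sA v A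
      = ((sA v A ⋏ mA v A) ⋏ v i) ⋏ (mA v A ⋏ sA v A) := by rw [sA_m1, sA_m2]
    _ = sA v A ⋏ (((mA v A ⋏ v i) ⋏ mA v A) ⋏ sA v A) := by simp only [wedge_assoc]
    _ = sA v A ⋏ (mA v A ⋏ sA v A) := by
        rw [show (mA v A ⋏ v i) ⋏ mA v A = mA v A from mList_absorb (mem_genList hi)]
    _ = sA v A := by rw [sA_m2, wedge_idem]

/-- Sandwiching the selector by a generator outside `A` gives zero. -/
theorem sKill {j : Fin n} (hj : j ∉ A) : (sA v A ⋏ v j) ⋏ sA v A = zero := by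
  have h0 : (sA v A ⋏ DA v A) ⋏ sA v A = zero := by
    have : sA v A ⋏ DA v A = zero := diff_kill_r _ _
    rw [this, zero_wedge]
  have h1 : jList ((genList v Aᶜ).map
      (fun a => sA v A ⋏ a ⋏ sA v A)) = zero := by
    rw [← sand_jList]; exact h0
  exact jList_eq_zero h1 _
    (List.mem_map.mpr ⟨v j, mem_genList (Finset.mem_compl.mpr hj), rfl⟩)

theorem EtEt {a b c d : Fin n} (hb : b ∈ A) (hc : c ∈ A) :
    Et v A a b ⋏ Et v A c d = Et v A a d := by
  have hmid : ((sA v A ⋏ v b) ⋏ v c) ⋏ sA v A = sA v A := by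
    rw [insert_mid, sv hb]; exact sv hc
  calc Et v A a b ⋏ Et v A c d
      = v a ⋏ ((((sA v A ⋏ v b) ⋏ v c) ⋏ sA v A) ⋏ v d) := by
        show ((v a ⋏ sA v A) ⋏ v b) ⋏ ((v c ⋏ sA v A) ⋏ v d) = _
        simp only [wedge_assoc]
    _ = v a ⋏ (sA v A ⋏ v d) := by rw [hmid]
    _ = Et v A a d := (wedge_assoc _ _ _).symm

theorem EtSand {a b c d : Fin n} (ha : a ∈ A) (hb : b ∈ A) (hc : c ∈ A)
    (hd : d ∈ A) : (Et v A a b ⋏ Et v A c d) ⋏ Et v A a b = Et v A a b := by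
  rw [EtEt hb hc, EtEt hd ha]

theorem EtJoin {a b c d : Fin n} (ha : a ∈ A) (hb : b ∈ A) (hc : c ∈ A)
    (hd : d ∈ A) : Et v A a b ⋎ Et v A c d = Et v A c b := by
  rw [djoin (EtSand ha hb hc hd) (EtSand hc hd ha hb), EtEt hd ha]

theorem EtDiff {a b c d : Fin n} (ha : a ∈ A) (hb : b ∈ A) (hc : c ∈ A)
    (hd : d ∈ A) : Et v A a b ∖ Et v A c d = zero :=
  sdiff_of_top (EtSand ha hb hc hd)

/-- Sandwiching an atom term by a generator outside its component kills it. -/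
theorem EvE {c d j : Fin n} (hj : j ∉ B) :
    (Et v B c d ⋏ v j) ⋏ Et v B c d = zero := by
  have hmid : (sA v B ⋏ mList [v d, v j, v c]) ⋏ sA v B = zero := by
    rw [sand_mList _ (by simp)]
    exact mList_zero (List.mem_map.mpr ⟨v j, by simp, sKill hj⟩)
  calc (Et v B c d ⋏ v j) ⋏ Et v B c d
      = v c ⋏ (((sA v B ⋏ mList [v d, v j, v c]) ⋏ sA v B) ⋏ v d) := by
        show (((v c ⋏ sA v B) ⋏ v d) ⋏ v j) ⋏ ((v c ⋏ sA v B) ⋏ v d) = _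
        rw [mList_three]
        simp only [wedge_assoc]
    _ = v c ⋏ (zero ⋏ v d) := by rw [hmid]
    _ = zero := by rw [zero_wedge, wedge_zero]

theorem Et_orth_aux {a b c d j : Fin n} (hj : j ∈ A) (hj' : j ∉ B) :
    Et v B c d ⋏ Et v A a b = zero ∧ Et v A a b ⋏ Et v B c d = zero := by
  have h5 : Et v A a b = mList [v a, sA v A, v j, sA v A, v b] := by
    calc Et v A a b = (v a ⋏ ((sA v A ⋏ v j) ⋏ sA v A)) ⋏ v b := by rw [sv hj]; rfl
      _ = mList [v a, sA v A, v j, sA v A, v b] := by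
          rw [mList_five]; simp only [wedge_assoc]
  have hZ : (Et v B c d ⋏ Et v A a b) ⋏ Et v B c d = zero := by
    rw [h5, sand_mList _ (by simp)]
    exact mList_zero (List.mem_map.mpr ⟨v j, by simp, EvE hj'⟩)
  exact orth_of_sandwich hZ

theorem Et_orth {a b c d : Fin n} (hAB : A ≠ B) :
    Et v A a b ⋏ Et v B c d = zero ∧ Et v B c d ⋏ Et v A a b = zero := by
  by_cases hsub : A ⊆ B
  · have hss : A ⊂ B := ⟨hsub, fun h => hAB (le_antisymm hsub h)⟩
    obtain ⟨j, hj, hj'⟩ := Finset.exists_of_ssubset hss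
    exact (Et_orth_aux (v := v) (a := c) (b := d) (c := a) (d := b) hj hj')
  · obtain ⟨j, hj, hj'⟩ := Finset.not_subset.mp hsub
    exact (Et_orth_aux (v := v) (a := a) (b := b) (c := c) (d := d) hj hj').symm

end SBA
namespace SBA

variable {S : Type u} [SBA S]

theorem sand_vee (c c' p q : S) :
    ((c ⋏ p) ⋏ c') ⋎ ((c ⋏ q) ⋏ c') = (c ⋏ (p ⋎ q)) ⋏ c' := by
  rw [sdistrib1, sdistrib2]

/-- Difference restricted below an element. -/
theorem diff_restrict {x q y : S} (hq : nle q x) : q ∖ y = q ⋏ (x ∖ y) := by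
  have hX : nle (x ∖ y) x := diff_nle x y
  have hzq : nle (q ⋏ (x ∖ y)) q := by
    constructor
    · calc (q ⋏ (x ∖ y)) ⋏ q = q ⋏ ((x ∖ y) ⋏ q) := wedge_assoc _ _ _
        _ = q ⋏ (q ⋏ (x ∖ y)) := by rw [comm0 hX hq]
        _ = (q ⋏ q) ⋏ (x ∖ y) := (wedge_assoc _ _ _).symm
        _ = q ⋏ (x ∖ y) := by rw [wedge_idem]
    · calc q ⋏ (q ⋏ (x ∖ y)) = (q ⋏ q) ⋏ (x ∖ y) := (wedge_assoc _ _ _).symm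
        _ = q ⋏ (x ∖ y) := by rw [wedge_idem]
  have hdecomp : q = ((q ⋏ y) ⋏ x) ⋎ (q ⋏ (x ∖ y)) := by
    calc q = q ⋏ x := hq.1.symm
      _ = q ⋏ (((x ⋏ y) ⋏ x) ⋎ (x ∖ y)) := by rw [diff_ax1]
      _ = (q ⋏ ((x ⋏ y) ⋏ x)) ⋎ (q ⋏ (x ∖ y)) := sdistrib1 _ _ _
      _ = (((q ⋏ x) ⋏ y) ⋏ x) ⋎ (q ⋏ (x ∖ y)) := by simp only [wedge_assoc]
      _ = ((q ⋏ y) ⋏ x) ⋎ (q ⋏ (x ∖ y)) := by rw [hq.1]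
  have habs := absorb1 ((q ⋏ y) ⋏ x) (q ⋏ (x ∖ y))
  rw [← hdecomp] at habs
  have hw : (q ⋏ y) ⋏ q = (q ⋏ y) ⋏ x := by
    calc (q ⋏ y) ⋏ q = ((q ⋏ y) ⋏ x) ⋏ q := by rw [wedge_assoc (q ⋏ y) x q, hq.2]
      _ = (q ⋏ y) ⋏ x := habs
  have hzw : (q ⋏ (x ∖ y)) ⋏ ((q ⋏ y) ⋏ q) = zero := by
    calc (q ⋏ (x ∖ y)) ⋏ ((q ⋏ y) ⋏ q)
        = ((q ⋏ ((x ∖ y) ⋏ q)) ⋏ y) ⋏ q := by simp only [wedge_assoc]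
      _ = ((q ⋏ (q ⋏ (x ∖ y))) ⋏ y) ⋏ q := by rw [comm0 hX hq]
      _ = (((q ⋏ q) ⋏ (x ∖ y)) ⋏ y) ⋏ q := by rw [wedge_assoc q q (x ∖ y)]
      _ = ((q ⋏ (x ∖ y)) ⋏ y) ⋏ q := by rw [wedge_idem]
      _ = (q ⋏ ((x ∖ y) ⋏ y)) ⋏ q := by rw [wedge_assoc q (x ∖ y) y]
      _ = zero := by rw [diff_kill_r, wedge_zero, zero_wedge]
  have h3 : ((q ⋏ y) ⋏ q) ⋎ (q ⋏ (x ∖ y)) = q := by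
    rw [hw]; exact hdecomp.symm
  exact diff_char hzq hzw h3

/-- Iterated difference. -/
theorem diff_diff (x D k : S) : (x ∖ D) ∖ k = x ∖ (D ⋎ k) := by
  have hX : nle (x ∖ D) x := diff_nle x D
  have hq : nle ((x ⋏ k) ⋏ x) x := nle_sandwich x k
  have hZx : nle ((x ∖ D) ∖ k) x := nle_trans (diff_nle _ _) hX
  have hw : (x ⋏ (D ⋎ k)) ⋏ x = ((x ⋏ D) ⋏ x) ⋎ ((x ⋏ k) ⋏ x) := by
    rw [sdistrib1, sdistrib2]
  have hsub1a : ((x ∖ D) ⋏ k) ⋏ (x ∖ D) = ((x ⋏ k) ⋏ x) ⋏ (x ∖ D) := by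
    calc ((x ∖ D) ⋏ k) ⋏ (x ∖ D)
        = (((x ∖ D) ⋏ x) ⋏ k) ⋏ (x ⋏ (x ∖ D)) := by rw [hX.1, hX.2]
      _ = (x ∖ D) ⋏ (((x ⋏ k) ⋏ x) ⋏ (x ∖ D)) := by simp only [wedge_assoc]
      _ = (((x ⋏ k) ⋏ x) ⋏ (x ∖ D)) ⋏ (x ∖ D) := by
          rw [comm0 hX (nle_wedge hq hX)]
      _ = ((x ⋏ k) ⋏ x) ⋏ ((x ∖ D) ⋏ (x ∖ D)) := wedge_assoc _ _ _
      _ = ((x ⋏ k) ⋏ x) ⋏ (x ∖ D) := by rw [wedge_idem]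
  have hq_decomp : (x ⋏ k) ⋏ x =
      (((x ⋏ k) ⋏ x) ⋏ ((x ⋏ D) ⋏ x)) ⋎ (((x ⋏ k) ⋏ x) ⋏ (x ∖ D)) := by
    calc (x ⋏ k) ⋏ x = ((x ⋏ k) ⋏ x) ⋏ x := by rw [wedge_assoc (x ⋏ k) x x, wedge_idem]
      _ = ((x ⋏ k) ⋏ x) ⋏ (((x ⋏ D) ⋏ x) ⋎ (x ∖ D)) := by rw [diff_ax1]
      _ = (((x ⋏ k) ⋏ x) ⋏ ((x ⋏ D) ⋏ x)) ⋎ (((x ⋏ k) ⋏ x) ⋏ (x ∖ D)) :=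
          sdistrib1 _ _ _
  have hpq : ((x ⋏ D) ⋏ x) ⋎ ((x ⋏ k) ⋏ x) =
      ((x ⋏ D) ⋏ x) ⋎ (((x ⋏ k) ⋏ x) ⋏ (x ∖ D)) := by
    conv_lhs => rw [hq_decomp]
    rw [← vee_assoc, comm0 (nle_sandwich x k) (nle_sandwich x D), absorb3]
  have h1 : ((x ∖ D) ∖ k) ⋏ ((x ⋏ (D ⋎ k)) ⋏ x) = zero := by
    rw [hw, sdistrib1]
    have hZp : ((x ∖ D) ∖ k) ⋏ ((x ⋏ D) ⋏ x) = zero := by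
      calc ((x ∖ D) ∖ k) ⋏ ((x ⋏ D) ⋏ x)
          = ((((x ∖ D) ∖ k) ⋏ x) ⋏ D) ⋏ x := by simp only [wedge_assoc]
        _ = (((x ∖ D) ∖ k) ⋏ D) ⋏ x := by rw [hZx.1]
        _ = ((((x ∖ D) ∖ k) ⋏ (x ∖ D)) ⋏ D) ⋏ x := by rw [(diff_nle (x ∖ D) k).1]
        _ = (((x ∖ D) ∖ k) ⋏ ((x ∖ D) ⋏ D)) ⋏ x := by
            rw [wedge_assoc ((x ∖ D) ∖ k) (x ∖ D) D]
        _ = zero := by rw [diff_kill_r, wedge_zero, zero_wedge]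
    have hZq : ((x ∖ D) ∖ k) ⋏ ((x ⋏ k) ⋏ x) = zero := by
      calc ((x ∖ D) ∖ k) ⋏ ((x ⋏ k) ⋏ x)
          = ((((x ∖ D) ∖ k) ⋏ x) ⋏ k) ⋏ x := by simp only [wedge_assoc]
        _ = (((x ∖ D) ∖ k) ⋏ k) ⋏ x := by rw [hZx.1]
        _ = zero := by rw [diff_kill_r, zero_wedge]
    rw [hZp, hZq, vee_zero]
  have h3 : ((x ⋏ (D ⋎ k)) ⋏ x) ⋎ ((x ∖ D) ∖ k) = x := by
    calc ((x ⋏ (D ⋎ k)) ⋏ x) ⋎ ((x ∖ D) ∖ k)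
        = (((x ⋏ D) ⋏ x) ⋎ (((x ⋏ k) ⋏ x) ⋏ (x ∖ D))) ⋎ ((x ∖ D) ∖ k) := by
          rw [hw, hpq]
      _ = ((x ⋏ D) ⋏ x) ⋎ ((((x ⋏ k) ⋏ x) ⋏ (x ∖ D)) ⋎ ((x ∖ D) ∖ k)) :=
          vee_assoc _ _ _
      _ = ((x ⋏ D) ⋏ x) ⋎ ((((x ∖ D) ⋏ k) ⋏ (x ∖ D)) ⋎ ((x ∖ D) ∖ k)) := by
          rw [hsub1a]
      _ = ((x ⋏ D) ⋏ x) ⋎ (x ∖ D) := by rw [diff_ax1]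
      _ = x := diff_ax1 x D
  exact (diff_char hZx h1 h3).symm

/-- `x ∖ jList l` only depends on the list up to permutation. -/
theorem diff_jList_perm {l l' : List S} (hp : l.Perm l') (x : S) :
    x ∖ jList l = x ∖ jList l' := by
  have hW : (x ⋏ jList l) ⋏ x = (x ⋏ jList l') ⋏ x := by
    rw [sand_jList, sand_jList]
    refine jList_perm (hp.map _) ?_
    intro a ha b hb
    obtain ⟨u, -, rfl⟩ := List.mem_map.mp ha
    obtain ⟨w, -, rfl⟩ := List.mem_map.mp hb
    exact vcomm0 (nle_sandwich x u) (nle_sandwich x w)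
  exact (diff_char (diff_nle x (jList l))
    (by rw [← hW]; exact diff_ax3 x (jList l))
    (by rw [← hW]; exact diff_ax1 x (jList l))).symm

/-- The splitting identity. -/
theorem diff_split (x D k : S) :
    x ∖ D = (((x ⋏ k) ⋏ x) ∖ D) ⋎ (x ∖ (D ⋎ k)) := by
  have hX : nle (x ∖ D) x := diff_nle x D
  have hq : nle ((x ⋏ k) ⋏ x) x := nle_sandwich x k
  have hsub1a : ((x ∖ D) ⋏ k) ⋏ (x ∖ D) = ((x ⋏ k) ⋏ x) ⋏ (x ∖ D) := by
    calc ((x ∖ D) ⋏ k) ⋏ (x ∖ D)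
        = (((x ∖ D) ⋏ x) ⋏ k) ⋏ (x ⋏ (x ∖ D)) := by rw [hX.1, hX.2]
      _ = (x ∖ D) ⋏ (((x ⋏ k) ⋏ x) ⋏ (x ∖ D)) := by simp only [wedge_assoc]
      _ = (((x ⋏ k) ⋏ x) ⋏ (x ∖ D)) ⋏ (x ∖ D) := by
          rw [comm0 hX (nle_wedge hq hX)]
      _ = ((x ⋏ k) ⋏ x) ⋏ ((x ∖ D) ⋏ (x ∖ D)) := wedge_assoc _ _ _
      _ = ((x ⋏ k) ⋏ x) ⋏ (x ∖ D) := by rw [wedge_idem]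
  calc x ∖ D = (((x ∖ D) ⋏ k) ⋏ (x ∖ D)) ⋎ ((x ∖ D) ∖ k) := (diff_ax1 _ _).symm
    _ = (((x ⋏ k) ⋏ x) ⋏ (x ∖ D)) ⋎ ((x ∖ D) ∖ k) := by rw [hsub1a]
    _ = (((x ⋏ k) ⋏ x) ∖ D) ⋎ ((x ∖ D) ∖ k) := by rw [← diff_restrict hq]
    _ = (((x ⋏ k) ⋏ x) ∖ D) ⋎ (x ∖ (D ⋎ k)) := by rw [diff_diff]

end SBA
namespace SBA

set_option linter.unusedSectionVars false

variable {T : Type u} [SBA T] {n : ℕ}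

theorem sA_def (v : Fin n → T) (A : Finset (Fin n)) :
    sA v A = mA v A ∖ DA v A := rfl

theorem Et_def (v : Fin n → T) (A : Finset (Fin n)) (a b : Fin n) :
    Et v A a b = (v a ⋏ sA v A) ⋏ v b := rfl

/-- The sandwich term. -/
def xT (v : Fin n → T) (A : Finset (Fin n)) (i : Fin n) : T :=
  (v i ⋏ mA v A) ⋏ v i

theorem xT_def (v : Fin n → T) (A : Finset (Fin n)) (i : Fin n) :
    xT v A i = (v i ⋏ mA v A) ⋏ v i := rfl

theorem sort_ne_nil {A : Finset (Fin n)} (hA : A.Nonempty) :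
    A.sort (· ≤ ·) ≠ [] := by
  obtain ⟨a, ha⟩ := hA
  intro h
  have := (Finset.mem_sort (α := Fin n) (· ≤ ·)).mpr ha
  rw [h] at this; simp at this

variable {v : Fin n → T} {A : Finset (Fin n)} {i k : Fin n}

theorem xT_le : nle (xT v A i) (v i) := nle_sandwich _ _

/-- The key identity: the atom term is the complement of the overlap in the
sandwich term. -/
theorem xT_diff (hi : i ∈ A) : xT v A i ∖ DA v A = Et v A i i := by
  have habs : (mA v A ⋏ v i) ⋏ mA v A = mA v A := mList_absorb (mem_genList hi)
  have hzx : nle (Et v A i i) (xT v A i) := by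
    constructor
    · calc Et v A i i ⋏ xT v A i
          = v i ⋏ ((sA v A ⋏ ((v i ⋏ v i) ⋏ mA v A)) ⋏ v i) := by
            rw [Et_def, xT_def]; simp only [wedge_assoc]
        _ = v i ⋏ ((sA v A ⋏ (v i ⋏ mA v A)) ⋏ v i) := by rw [wedge_idem]
        _ = v i ⋏ (((sA v A ⋏ mA v A) ⋏ (v i ⋏ mA v A)) ⋏ v i) := by rw [sA_m1]
        _ = v i ⋏ ((sA v A ⋏ ((mA v A ⋏ v i) ⋏ mA v A)) ⋏ v i) := by
            simp only [wedge_assoc]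
        _ = v i ⋏ ((sA v A ⋏ mA v A) ⋏ v i) := by rw [habs]
        _ = Et v A i i := by rw [sA_m1, ← wedge_assoc, ← Et_def]
    · calc xT v A i ⋏ Et v A i i
          = v i ⋏ ((mA v A ⋏ ((v i ⋏ v i) ⋏ sA v A)) ⋏ v i) := by
            rw [Et_def, xT_def]; simp only [wedge_assoc]
        _ = v i ⋏ ((mA v A ⋏ (v i ⋏ sA v A)) ⋏ v i) := by rw [wedge_idem]
        _ = v i ⋏ ((mA v A ⋏ (v i ⋏ (mA v A ⋏ sA v A))) ⋏ v i) := by rw [sA_m2]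
        _ = v i ⋏ ((((mA v A ⋏ v i) ⋏ mA v A) ⋏ sA v A) ⋏ v i) := by
            simp only [wedge_assoc]
        _ = v i ⋏ ((mA v A ⋏ sA v A) ⋏ v i) := by rw [habs]
        _ = Et v A i i := by rw [sA_m2, ← wedge_assoc, ← Et_def]
  have hzDz : (Et v A i i ⋏ DA v A) ⋏ Et v A i i = zero := by
    have hmid : (sA v A ⋏ mList [v i, DA v A, v i]) ⋏ sA v A = zero := by
      rw [sand_mList _ (by simp)]
      refine mList_zero (List.mem_map.mpr ⟨DA v A, by simp, ?_⟩)
      have h0 : sA v A ⋏ DA v A = zero := by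
        rw [sA_def]; exact diff_kill_r _ _
      rw [h0, zero_wedge]
    calc (Et v A i i ⋏ DA v A) ⋏ Et v A i i
        = v i ⋏ (((sA v A ⋏ mList [v i, DA v A, v i]) ⋏ sA v A) ⋏ v i) := by
          rw [Et_def, mList_three]; simp only [wedge_assoc]
      _ = v i ⋏ (zero ⋏ v i) := by rw [hmid]
      _ = zero := by rw [zero_wedge, wedge_zero]
  have hzw : Et v A i i ⋏ ((xT v A i ⋏ DA v A) ⋏ xT v A i) = zero := by
    have h0 : (Et v A i i ⋏ ((xT v A i ⋏ DA v A) ⋏ xT v A i)) ⋏ Et v A i i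
        = zero := by
      calc (Et v A i i ⋏ ((xT v A i ⋏ DA v A) ⋏ xT v A i)) ⋏ Et v A i i
          = ((Et v A i i ⋏ xT v A i) ⋏ DA v A) ⋏ (xT v A i ⋏ Et v A i i) := by
            simp only [wedge_assoc]
        _ = (Et v A i i ⋏ DA v A) ⋏ Et v A i i := by rw [hzx.1, hzx.2]
        _ = zero := hzDz
    exact (orth_of_sandwich h0).1
  have hmid2 : (mA v A ⋏ mList [v i, DA v A, v i]) ⋏ mA v A
      = (mA v A ⋏ DA v A) ⋏ mA v A := by
    rw [sand_mList _ (by simp)]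
    show mList [(mA v A ⋏ v i) ⋏ mA v A, (mA v A ⋏ DA v A) ⋏ mA v A,
      (mA v A ⋏ v i) ⋏ mA v A] = _
    rw [habs, mList_three]
    calc mA v A ⋏ (((mA v A ⋏ DA v A) ⋏ mA v A) ⋏ mA v A)
        = mA v A ⋏ ((mA v A ⋏ DA v A) ⋏ (mA v A ⋏ mA v A)) := by
          rw [wedge_assoc (mA v A ⋏ DA v A) (mA v A) (mA v A)]
      _ = mA v A ⋏ ((mA v A ⋏ DA v A) ⋏ mA v A) := by rw [wedge_idem]
      _ = ((mA v A ⋏ mA v A) ⋏ DA v A) ⋏ mA v A := by simp only [wedge_assoc]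
      _ = (mA v A ⋏ DA v A) ⋏ mA v A := by rw [wedge_idem]
  have hw : (xT v A i ⋏ DA v A) ⋏ xT v A i
      = (v i ⋏ ((mA v A ⋏ DA v A) ⋏ mA v A)) ⋏ v i := by
    calc (xT v A i ⋏ DA v A) ⋏ xT v A i
        = (v i ⋏ ((mA v A ⋏ mList [v i, DA v A, v i]) ⋏ mA v A)) ⋏ v i := by
          rw [xT_def, mList_three]; simp only [wedge_assoc]
      _ = (v i ⋏ ((mA v A ⋏ DA v A) ⋏ mA v A)) ⋏ v i := by rw [hmid2]
  have h3 : ((xT v A i ⋏ DA v A) ⋏ xT v A i) ⋎ Et v A i i = xT v A i := by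
    calc ((xT v A i ⋏ DA v A) ⋏ xT v A i) ⋎ Et v A i i
        = ((v i ⋏ ((mA v A ⋏ DA v A) ⋏ mA v A)) ⋏ v i) ⋎
            ((v i ⋏ sA v A) ⋏ v i) := by rw [hw, Et_def]
      _ = (v i ⋏ (((mA v A ⋏ DA v A) ⋏ mA v A) ⋎ sA v A)) ⋏ v i :=
          sand_vee _ _ _ _
      _ = (v i ⋏ mA v A) ⋏ v i := by rw [sA_def, diff_ax1]
      _ = xT v A i := (xT_def _ _ _).symm
  exact diff_char hzx hzw h3

/-- Inserting a new generator into the sandwich. -/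
theorem xT_insert (hA : A.Nonempty) (hi : i ∈ A) (hk : k ∉ A) :
    xT v (insert k A) i = (xT v A i ⋏ v k) ⋏ xT v A i := by
  have hKle : nle (mList ((genList v A).map (fun a => (v i ⋏ a) ⋏ v i))) (v i) := by
    refine mList_le ?_ (by
      intro h
      exact genList_ne_nil hA (List.map_eq_nil_iff.mp h))
    intro a ha
    obtain ⟨u, -, rfl⟩ := List.mem_map.mp ha
    exact nle_sandwich _ _
  have hSk : nle ((v i ⋏ v k) ⋏ v i) (v i) := nle_sandwich _ _
  have hRHS : (xT v A i ⋏ v k) ⋏ xT v A i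
      = mList ((genList v A).map (fun a => (v i ⋏ a) ⋏ v i)) ⋏
          ((v i ⋏ v k) ⋏ v i) := by
    calc (xT v A i ⋏ v k) ⋏ xT v A i
        = ((xT v A i ⋏ v i) ⋏ v k) ⋏ (v i ⋏ xT v A i) := by
          rw [(xT_le (v := v) (A := A) (i := i)).1, xT_le.2]
      _ = xT v A i ⋏ (((v i ⋏ v k) ⋏ v i) ⋏ xT v A i) := by
          simp only [wedge_assoc]
      _ = xT v A i ⋏ (xT v A i ⋏ ((v i ⋏ v k) ⋏ v i)) := by
          rw [comm0 hSk xT_le]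
      _ = (xT v A i ⋏ xT v A i) ⋏ ((v i ⋏ v k) ⋏ v i) :=
          (wedge_assoc _ _ _).symm
      _ = xT v A i ⋏ ((v i ⋏ v k) ⋏ v i) := by rw [wedge_idem]
      _ = mList ((genList v A).map (fun a => (v i ⋏ a) ⋏ v i)) ⋏
            ((v i ⋏ v k) ⋏ v i) := by
          rw [show xT v A i
            = mList ((genList v A).map (fun a => (v i ⋏ a) ⋏ v i)) from
            sand_mList (v i) (genList_ne_nil hA)]
  have hperm : ((insert k A).sort (· ≤ ·)).Perm (A.sort (· ≤ ·) ++ [k]) := by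
    refine (List.perm_ext_iff_of_nodup (Finset.sort_nodup _ _) ?_).mpr ?_
    · refine List.Nodup.append (Finset.sort_nodup _ _) (by simp) ?_
      intro a ha hb
      have : a = k := by simpa using hb
      subst this
      exact hk ((Finset.mem_sort _).mp ha)
    · intro a
      simp [Finset.mem_sort, Finset.mem_insert, or_comm]
  have hLHS : xT v (insert k A) i
      = mList (((A.sort (· ≤ ·) ++ [k]).map v).map (fun a => (v i ⋏ a) ⋏ v i)) := by
    rw [show xT v (insert k A) i
        = mList ((genList v (insert k A)).map (fun a => (v i ⋏ a) ⋏ v i)) from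
        sand_mList (v i) (genList_ne_nil ⟨k, by simp⟩)]
    refine mList_perm (e := v i) ((hperm.map v).map _) ?_
    intro a ha
    obtain ⟨u, -, rfl⟩ := List.mem_map.mp ha
    exact nle_sandwich _ _
  rw [hLHS, hRHS]
  rw [List.map_append, List.map_append]
  rw [mList_append (by simp [sort_ne_nil hA]) (by simp)]
  rfl

end SBA
namespace SBA

set_option linter.unusedSectionVars false

variable {T : Type u} [SBA T] {n : ℕ}

/-- Recursive splitting of a generator over the remaining generators. -/
def Jrec (v : Fin n → T) (i : Fin n) (A : Finset (Fin n)) :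
    List (Fin n) → T
  | [] => xT v A i ∖ DA v A
  | k :: R => Jrec v i (insert k A) R ⋎ Jrec v i A R

/-- All subsets of (the set of elements of) a list. -/
def subs : List (Fin n) → List (Finset (Fin n))
  | [] => [∅]
  | k :: R => ((subs R).map (insert k)) ++ subs R

theorem subs_mem {R : List (Fin n)} {B : Finset (Fin n)} :
    B ∈ subs R ↔ B ⊆ R.toFinset := by
  induction R generalizing B with
  | nil => simp [subs]
  | cons k R ih =>
    simp only [subs, List.mem_append, List.mem_map, List.toFinset_cons]
    constructor
    · rintro (⟨C, hC, rfl⟩ | hB)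
      · exact Finset.insert_subset_insert _ (ih.mp hC)
      · exact fun a ha => Finset.mem_insert_of_mem (ih.mp hB ha)
    · intro hB
      by_cases hk : k ∈ B
      · left
        refine ⟨B.erase k, ih.mpr ?_, Finset.insert_erase hk⟩
        intro a ha
        have h1 := Finset.mem_erase.mp ha
        rcases Finset.mem_insert.mp (hB h1.2) with h | h
        · exact absurd h h1.1
        · exact h
      · right
        refine ih.mpr ?_
        intro a ha
        rcases Finset.mem_insert.mp (hB ha) with h | h
        · exact absurd (h ▸ ha) hk
        · exact h

theorem subs_nodup {R : List (Fin n)} (hR : R.Nodup) : (subs R).Nodup := by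
  induction R with
  | nil => simp [subs]
  | cons k R ih =>
    obtain ⟨hk, hR'⟩ := List.nodup_cons.mp hR
    have hkR : k ∉ R.toFinset := fun h => hk (List.mem_toFinset.mp h)
    refine List.Nodup.append ?_ (ih hR') ?_
    · refine (List.nodup_map_iff_inj_on (ih hR')).mpr ?_
      intro C hC C' hC' h
      have hCk : k ∉ C := fun hh => hkR (subs_mem.mp hC hh)
      have hCk' : k ∉ C' := fun hh => hkR (subs_mem.mp hC' hh)
      have := congrArg (Finset.erase · k) h
      simpa [Finset.erase_insert, hCk, hCk'] using this
    · intro B hB hB'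
      obtain ⟨C, hC, rfl⟩ := List.mem_map.mp hB
      exact hkR (subs_mem.mp hB' (Finset.mem_insert_self k C))

theorem Jrec_eq (v : Fin n → T) (i : Fin n) (R : List (Fin n)) :
    ∀ A : Finset (Fin n), Jrec v i A R
      = jList ((subs R).map (fun B => xT v (B ∪ A) i ∖ DA v (B ∪ A))) := by
  induction R with
  | nil =>
    intro A
    show xT v A i ∖ DA v A
      = jList [xT v (∅ ∪ A) i ∖ DA v (∅ ∪ A)]
    rw [Finset.empty_union, jList_cons, jList_nil, vee_zero]
  | cons k R ih =>
    intro A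
    show Jrec v i (insert k A) R ⋎ Jrec v i A R = _
    rw [ih (insert k A), ih A]
    show _ = jList ((((subs R).map (insert k)) ++ subs R).map
      (fun B => xT v (B ∪ A) i ∖ DA v (B ∪ A)))
    rw [List.map_append, jList_append, List.map_map]
    congr 2
    refine List.map_congr_left ?_
    intro B hB
    have : insert k B ∪ A = B ∪ insert k A := by
      rw [Finset.insert_union, Finset.union_insert]
    simp only [Function.comp_apply, this]

theorem Jrec_diff (v : Fin n → T) (i : Fin n) (R : List (Fin n)) :
    ∀ A : Finset (Fin n), i ∈ A → R.Nodup → (∀ k ∈ R, k ∉ A) →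
      Jrec v i A R = xT v A i ∖ jList (genList v ((A ∪ R.toFinset)ᶜ)) := by
  induction R with
  | nil =>
    intro A hi _ _
    show xT v A i ∖ DA v A = _
    rw [show (A ∪ (List.toFinset ([] : List (Fin n))))ᶜ = Aᶜ by simp]
    rfl
  | cons k R ih =>
    intro A hi hnd hdisj
    have hkA : k ∉ A := hdisj k (by simp)
    have hA : A.Nonempty := ⟨i, hi⟩
    have hiA' : i ∈ insert k A := by simp [hi]
    obtain ⟨hkR, hndR⟩ := List.nodup_cons.mp hnd
    have hdisj' : ∀ j ∈ R, j ∉ insert k A := by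
      intro j hj
      simp only [Finset.mem_insert]
      push_neg
      exact ⟨fun h => hkR (h ▸ hj), hdisj j (by simp [hj])⟩
    have hdisjR : ∀ j ∈ R, j ∉ A := fun j hj => hdisj j (by simp [hj])
    have hset1 : insert k A ∪ R.toFinset = A ∪ (k :: R).toFinset := by
      rw [List.toFinset_cons, Finset.insert_union, Finset.union_insert]
    have hkC : k ∉ (A ∪ (k :: R).toFinset)ᶜ := by
      simp [Finset.mem_compl, List.toFinset_cons]
    have hsetins : (A ∪ R.toFinset)ᶜ = insert k ((A ∪ (k :: R).toFinset)ᶜ) := by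
      ext a
      by_cases hak : a = k
      · subst hak
        simp [Finset.mem_compl, List.mem_toFinset, hkA, hkR]
      · simp [Finset.mem_compl, Finset.mem_insert, hak, List.toFinset_cons]
    have hpermC : (genList v ((A ∪ R.toFinset)ᶜ)).Perm
        (v k :: genList v ((A ∪ (k :: R).toFinset)ᶜ)) := by
      rw [hsetins]
      show (((insert k ((A ∪ (k :: R).toFinset)ᶜ)).sort (· ≤ ·)).map v).Perm
        ((k :: ((A ∪ (k :: R).toFinset)ᶜ).sort (· ≤ ·)).map v)
      refine List.Perm.map v ?_
      refine (List.perm_ext_iff_of_nodup (Finset.sort_nodup _ _) ?_).mpr ?_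
      · simp [List.nodup_cons, Finset.sort_nodup, Finset.mem_sort, hkC]
      · intro a
        simp [Finset.mem_sort, Finset.mem_insert]
    show Jrec v i (insert k A) R ⋎ Jrec v i A R = _
    rw [ih (insert k A) hiA' hndR hdisj', ih A hi hndR hdisjR, hset1]
    rw [diff_jList_perm hpermC (xT v A i)]
    rw [show jList (v k :: genList v ((A ∪ (k :: R).toFinset)ᶜ))
      = v k ⋎ jList (genList v ((A ∪ (k :: R).toFinset)ᶜ)) from rfl]
    have hperm2 : ((genList v ((A ∪ (k :: R).toFinset)ᶜ)) ++ [v k]).Perm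
        (v k :: genList v ((A ∪ (k :: R).toFinset)ᶜ)) :=
      List.perm_append_singleton _ _
    have hDk : jList ((genList v ((A ∪ (k :: R).toFinset)ᶜ)) ++ [v k])
        = jList (genList v ((A ∪ (k :: R).toFinset)ᶜ)) ⋎ v k := by
      rw [jList_append]
      show _ = _ ⋎ (v k)
      rw [show jList [v k] = v k ⋎ zero from rfl, vee_zero]
    calc (xT v (insert k A) i ∖ jList (genList v ((A ∪ (k :: R).toFinset)ᶜ)))
          ⋎ (xT v A i ∖ (v k ⋎ jList (genList v ((A ∪ (k :: R).toFinset)ᶜ))))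
        = ((xT v A i ⋏ v k) ⋏ xT v A i ∖
              jList (genList v ((A ∪ (k :: R).toFinset)ᶜ)))
          ⋎ (xT v A i ∖ (jList (genList v ((A ∪ (k :: R).toFinset)ᶜ)) ⋎ v k)) := by
          rw [xT_insert hA hi hkA, ← hDk, diff_jList_perm hperm2, jList_cons]
      _ = xT v A i ∖ jList (genList v ((A ∪ (k :: R).toFinset)ᶜ)) :=
          (diff_split _ _ _).symm

/-- Partition of unity: a generator is the join of its atom terms. -/
theorem pou (v : Fin n → T) (i : Fin n) :
    jList ((subs ((({i} : Finset (Fin n))ᶜ).sort (· ≤ ·))).map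
      (fun B => Et v (B ∪ {i}) i i)) = v i := by
  have h1 := Jrec_diff v i ((({i} : Finset (Fin n))ᶜ).sort (· ≤ ·)) {i}
    (by simp) (Finset.sort_nodup _ _)
    (fun k hk => by
      have := (Finset.mem_sort _).mp hk
      simp only [Finset.mem_compl] at this
      exact this)
  have hunion : ({i} : Finset (Fin n)) ∪
      ((({i} : Finset (Fin n))ᶜ).sort (· ≤ ·)).toFinset = Finset.univ := by
    rw [Finset.sort_toFinset]
    simp [Finset.union_compl]
  rw [hunion] at h1
  have h2 : jList (genList v ((Finset.univ : Finset (Fin n))ᶜ)) = zero := by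
    rw [Finset.compl_univ]
    show jList (((∅ : Finset (Fin n)).sort (· ≤ ·)).map v) = zero
    rw [Finset.sort_empty]
    rfl
  rw [h2, diff_zero] at h1
  have h3 : xT v ({i} : Finset (Fin n)) i = v i := by
    have hm : mA v ({i} : Finset (Fin n)) = v i := by
      show mList (((({i} : Finset (Fin n))).sort (· ≤ ·)).map v) = v i
      rw [Finset.sort_singleton]
      rfl
    rw [xT_def, hm, wedge_idem, wedge_idem]
  rw [h3] at h1
  calc jList ((subs ((({i} : Finset (Fin n))ᶜ).sort (· ≤ ·))).map
        (fun B => Et v (B ∪ {i}) i i))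
      = jList ((subs ((({i} : Finset (Fin n))ᶜ).sort (· ≤ ·))).map
        (fun B => xT v (B ∪ {i}) i ∖ DA v (B ∪ {i}))) := by
        congr 1
        refine List.map_congr_left ?_
        intro B hB
        exact (xT_diff (by simp)).symm
    _ = Jrec v i {i} ((({i} : Finset (Fin n))ᶜ).sort (· ≤ ·)) :=
        (Jrec_eq v i _ {i}).symm
    _ = v i := h1

end SBA
open SBA

/-! ### The primitive skew Boolean algebra on `Option (α × α)` -/

namespace SBAModel

def pwedge {α : Type*} : Option (α × α) → Option (α × α) → Option (α × α)
  | some p, some q => some (p.1, q.2)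
  | _, none => none
  | none, _ => none

def pvee {α : Type*} : Option (α × α) → Option (α × α) → Option (α × α)
  | some p, some q => some (q.1, p.2)
  | some p, none => some p
  | none, y => y

def pdiff {α : Type*} : Option (α × α) → Option (α × α) → Option (α × α)
  | x, none => x
  | _, some _ => none

instance instP (α : Type*) : SBA (Option (α × α)) where
  wedge := pwedge
  vee := pvee
  diff := pdiff
  zero := none
  wedge_assoc := by rintro (_|x) (_|y) (_|z) <;> rfl
  vee_assoc := by rintro (_|x) (_|y) (_|z) <;> rfl
  absorb1 := by rintro (_|x) (_|y) <;> rfl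
  absorb2 := by rintro (_|x) (_|y) <;> rfl
  absorb3 := by rintro (_|x) (_|y) <;> rfl
  absorb4 := by rintro (_|x) (_|y) <;> rfl
  sdistrib1 := by rintro (_|x) (_|y) (_|z) <;> rfl
  sdistrib2 := by rintro (_|x) (_|y) (_|z) <;> rfl
  zero_wedge := by rintro (_|x) <;> rfl
  wedge_zero := by rintro (_|x) <;> rfl
  zero_vee := by rintro (_|x) <;> rfl
  vee_zero := by rintro (_|x) <;> rfl
  diff_ax1 := by rintro (_|x) (_|y) <;> rfl
  diff_ax2 := by rintro (_|x) (_|y) <;> rfl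
  diff_ax3 := by rintro (_|x) (_|y) <;> rfl

/-- Pointwise instance on products. -/
instance instPi {ι : Type*} (β : ι → Type*) [∀ i, SBA (β i)] :
    SBA (∀ i, β i) where
  wedge f g := fun i => f i ⋏ g i
  vee f g := fun i => f i ⋎ g i
  diff f g := fun i => f i ∖ g i
  zero := fun _ => zero
  wedge_assoc := by intro x y z; funext i; exact wedge_assoc _ _ _
  vee_assoc := by intro x y z; funext i; exact vee_assoc _ _ _
  absorb1 := by intro x y; funext i; exact absorb1 _ _
  absorb2 := by intro x y; funext i; exact absorb2 _ _
  absorb3 := by intro x y; funext i; exact absorb3 _ _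
  absorb4 := by intro x y; funext i; exact absorb4 _ _
  sdistrib1 := by intro x y z; funext i; exact sdistrib1 _ _ _
  sdistrib2 := by intro x y z; funext i; exact sdistrib2 _ _ _
  zero_wedge := by intro x; funext i; exact zero_wedge _
  wedge_zero := by intro x; funext i; exact wedge_zero _
  zero_vee := by intro x; funext i; exact zero_vee _
  vee_zero := by intro x; funext i; exact vee_zero _
  diff_ax1 := by intro x y; funext i; exact diff_ax1 _ _
  diff_ax2 := by intro x y; funext i; exact diff_ax2 _ _
  diff_ax3 := by intro x y; funext i; exact diff_ax3 _ _

/-- The index type: nonempty subsets of `Fin n`. -/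
abbrev Idx (n : ℕ) := {A : Finset (Fin n) // A.Nonempty}

/-- The concrete free model. -/
abbrev F (n : ℕ) := ∀ A : Idx n, Option ({a // a ∈ A.1} × {a // a ∈ A.1})

/-- The generators of the free model. -/
def XF (n : ℕ) (i : Fin n) : F n := fun A =>
  if h : i ∈ A.1 then some (⟨i, h⟩, ⟨i, h⟩) else none

section PointwiseLemmas

variable {ι : Type*} {β : ι → Type*} [∀ i, SBA (β i)]

theorem wedge_apply (f g : ∀ i, β i) (i : ι) : (f ⋏ g) i = f i ⋏ g i := rfl
theorem vee_apply (f g : ∀ i, β i) (i : ι) : (f ⋎ g) i = f i ⋎ g i := rfl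
theorem diff_apply (f g : ∀ i, β i) (i : ι) : (f ∖ g) i = f i ∖ g i := rfl
theorem zero_apply (i : ι) : (zero : ∀ i, β i) i = zero := rfl

theorem mList_apply (l : List (∀ i, β i)) (i : ι) :
    mList l i = mList (l.map (fun f => f i)) := by
  induction l with
  | nil => rfl
  | cons a l ih =>
    cases l with
    | nil => rfl
    | cons b m =>
      rw [mList_cons a (by simp), List.map_cons,
        mList_cons (a i) (by simp), wedge_apply, ih]

theorem jList_apply (l : List (∀ i, β i)) (i : ι) :
    jList l i = jList (l.map (fun f => f i)) := by
  induction l with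
  | nil => rfl
  | cons a l ih => rw [jList_cons, List.map_cons, jList_cons, vee_apply, ih]

end PointwiseLemmas

section PLemmas

variable {α : Type*}

theorem pzero_def : (zero : Option (α × α)) = none := rfl

theorem pwedge_somes (p q : α × α) :
    (some p ⋏ some q : Option (α × α)) = some (p.1, q.2) := rfl

theorem mListP_some {l : List (Option (α × α))} (hl : l ≠ [])
    (h : ∀ x ∈ l, x ≠ none) : ∃ p, mList l = some p := by
  induction l with
  | nil => exact absurd rfl hl
  | cons a l ih =>
    cases l with
    | nil =>
      obtain ⟨p, hp⟩ := Option.ne_none_iff_exists'.mp (h a (by simp))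
      exact ⟨p, by rw [mList_singleton, hp]⟩
    | cons b m =>
      obtain ⟨q, hq⟩ := ih (by simp) (fun x hx => h x (by simp [hx]))
      obtain ⟨p, hp⟩ := Option.ne_none_iff_exists'.mp (h a (by simp))
      refine ⟨(p.1, q.2), ?_⟩
      rw [mList_cons a (by simp), hq, hp]
      rfl

theorem jListP_some {l : List (Option (α × α))} {x : Option (α × α)}
    (hx : x ∈ l) (h : x ≠ none) : jList l ≠ none := by
  induction l with
  | nil => simp at hx
  | cons a l ih =>
    rw [jList_cons]
    rcases List.mem_cons.mp hx with h0 | h0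
    · subst h0
      obtain ⟨p, hp⟩ := Option.ne_none_iff_exists'.mp h
      rw [hp]
      cases jList l <;> simp [SBA.vee, pvee]
    · have := ih h0
      cases hj : jList l with
      | none => exact absurd hj this
      | some q =>
        cases a <;> simp [SBA.vee, pvee]
end PLemmas

end SBAModel
namespace SBA

set_option linter.unusedSectionVars false

variable {S : Type u} [SBA S]

/-- Binary orthogonal difference lemma. -/
theorem orth_diff {a a' b b' : S}
    (hab' : a ⋏ b' = zero) (hb'a : b' ⋏ a = zero)
    (ha'b : a' ⋏ b = zero) (hba' : b ⋏ a' = zero)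
    (haa' : a ⋏ a' = zero) (ha'a : a' ⋏ a = zero) :
    (a ⋎ a') ∖ (b ⋎ b') = (a ∖ b) ⋎ (a' ∖ b') := by
  have hXY : (a ⋎ a') ⋏ (b ⋎ b') = (a ⋏ b) ⋎ (a' ⋏ b') := by
    rw [sdistrib2, sdistrib1, sdistrib1, hab', ha'b, vee_zero, zero_vee]
  have hW : ((a ⋎ a') ⋏ (b ⋎ b')) ⋏ (a ⋎ a')
      = ((a ⋏ b) ⋏ a) ⋎ ((a' ⋏ b') ⋏ a') := by
    rw [hXY, sdistrib2, sdistrib1, sdistrib1]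
    rw [wedge_assoc a b a', hba', wedge_zero, vee_zero]
    rw [wedge_assoc a' b' a, hb'a, wedge_zero, zero_vee]
  have hzX : nle ((a ∖ b) ⋎ (a' ∖ b')) (a ⋎ a') := by
    constructor
    · rw [sdistrib2, sdistrib1, sdistrib1]
      rw [(diff_nle a b).1, orth_mono (diff_nle a b) (nle_refl a') haa',
        orth_mono (diff_nle a' b') (nle_refl a) ha'a, (diff_nle a' b').1,
        vee_zero, zero_vee]
    · rw [sdistrib1, sdistrib2, sdistrib2]
      rw [(diff_nle a b).2, orth_mono (nle_refl a') (diff_nle a b) ha'a,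
        orth_mono (nle_refl a) (diff_nle a' b') haa', (diff_nle a' b').2,
        vee_zero, zero_vee]
  have h1 : ((a ∖ b) ⋎ (a' ∖ b')) ⋏ (((a ⋎ a') ⋏ (b ⋎ b')) ⋏ (a ⋎ a'))
      = zero := by
    rw [hW, sdistrib1, sdistrib2, sdistrib2]
    rw [diff_ax3, orth_mono (diff_nle a' b') (nle_sandwich a b) ha'a,
      orth_mono (diff_nle a b) (nle_sandwich a' b') haa', diff_ax3,
      vee_zero, zero_vee]
  have h3 : (((a ⋎ a') ⋏ (b ⋎ b')) ⋏ (a ⋎ a')) ⋎ ((a ∖ b) ⋎ (a' ∖ b'))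
      = a ⋎ a' := by
    rw [hW]
    have hcomm : ((a' ⋏ b') ⋏ a') ⋎ (a ∖ b) = (a ∖ b) ⋎ ((a' ⋏ b') ⋏ a') :=
      orth_vee_comm (orth_mono (nle_sandwich a' b') (diff_nle a b) ha'a)
        (orth_mono (diff_nle a b) (nle_sandwich a' b') haa')
    calc (((a ⋏ b) ⋏ a) ⋎ ((a' ⋏ b') ⋏ a')) ⋎ ((a ∖ b) ⋎ (a' ∖ b'))
        = ((a ⋏ b) ⋏ a) ⋎ ((((a' ⋏ b') ⋏ a') ⋎ (a ∖ b)) ⋎ (a' ∖ b')) := by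
          simp only [vee_assoc]
      _ = ((a ⋏ b) ⋏ a) ⋎ (((a ∖ b) ⋎ ((a' ⋏ b') ⋏ a')) ⋎ (a' ∖ b')) := by
          rw [hcomm]
      _ = (((a ⋏ b) ⋏ a) ⋎ (a ∖ b)) ⋎ (((a' ⋏ b') ⋏ a') ⋎ (a' ∖ b')) := by
          simp only [vee_assoc]
      _ = a ⋎ a' := by rw [diff_ax1, diff_ax1]
  exact diff_char hzX h1 h3

end SBA

namespace SBAModel

open SBA

set_option linter.unusedSectionVars false

variable {T : Type u} [SBA T] {n : ℕ}

/-- Families of atom terms (or zero) indexed by components. -/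
def IsTermFam (v : Fin n → T) (t : Idx n → T) : Prop :=
  ∀ A : Idx n, t A = zero ∨ ∃ p q, t A = Et v A.1 p q

theorem fam_orth {v : Fin n → T} {t₁ t₂ : Idx n → T}
    (h₁ : IsTermFam v t₁) (h₂ : IsTermFam v t₂) {A B : Idx n} (hAB : A ≠ B) :
    t₁ A ⋏ t₂ B = zero := by
  rcases h₁ A with h | ⟨p, q, h⟩
  · rw [h, zero_wedge]
  rcases h₂ B with h' | ⟨p', q', h'⟩
  · rw [h', wedge_zero]
  rw [h, h']
  exact (Et_orth (fun hv => hAB (Subtype.ext hv))).1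

theorem fam_orth_jList_r {v : Fin n → T} {t₁ t₂ : Idx n → T}
    (h₁ : IsTermFam v t₁) (h₂ : IsTermFam v t₂) {A : Idx n} {L : List (Idx n)}
    (hA : A ∉ L) : t₁ A ⋏ jList (L.map t₂) = zero := by
  refine orth_jList_r ?_
  intro a ha
  obtain ⟨B, hB, rfl⟩ := List.mem_map.mp ha
  exact fam_orth h₁ h₂ (fun h => hA (h ▸ hB))

theorem fam_orth_jList_l {v : Fin n → T} {t₁ t₂ : Idx n → T}
    (h₁ : IsTermFam v t₁) (h₂ : IsTermFam v t₂) {A : Idx n} {L : List (Idx n)}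
    (hA : A ∉ L) : jList (L.map t₁) ⋏ t₂ A = zero := by
  refine orth_jList_l ?_
  intro a ha
  obtain ⟨B, hB, rfl⟩ := List.mem_map.mp ha
  exact fam_orth h₁ h₂ (fun h => hA (h.symm ▸ hB))

theorem fam_wedge {v : Fin n → T} {t₁ t₂ : Idx n → T}
    (h₁ : IsTermFam v t₁) (h₂ : IsTermFam v t₂) :
    ∀ L : List (Idx n), L.Nodup →
      jList (L.map t₁) ⋏ jList (L.map t₂) = jList (L.map fun A => t₁ A ⋏ t₂ A) := by
  intro L
  induction L with
  | nil => intro _; exact wedge_zero _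
  | cons A L ih =>
    intro hnd
    obtain ⟨hA, hnd'⟩ := List.nodup_cons.mp hnd
    simp only [List.map_cons, jList_cons]
    rw [sdistrib2, sdistrib1, sdistrib1]
    rw [fam_orth_jList_r h₁ h₂ hA, fam_orth_jList_l h₁ h₂ hA,
      vee_zero, zero_vee, ih hnd']

theorem fam_vee {v : Fin n → T} {t₁ t₂ : Idx n → T}
    (h₁ : IsTermFam v t₁) (h₂ : IsTermFam v t₂) :
    ∀ L : List (Idx n), L.Nodup →
      jList (L.map t₁) ⋎ jList (L.map t₂) = jList (L.map fun A => t₁ A ⋎ t₂ A) := by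
  intro L
  induction L with
  | nil => intro _; exact vee_zero _
  | cons A L ih =>
    intro hnd
    obtain ⟨hA, hnd'⟩ := List.nodup_cons.mp hnd
    simp only [List.map_cons, jList_cons]
    have hcomm : jList (L.map t₁) ⋎ t₂ A = t₂ A ⋎ jList (L.map t₁) :=
      orth_vee_comm (fam_orth_jList_l h₁ h₂ hA) (fam_orth_jList_r h₂ h₁ hA)
    calc (t₁ A ⋎ jList (L.map t₁)) ⋎ (t₂ A ⋎ jList (L.map t₂))
        = t₁ A ⋎ ((jList (L.map t₁) ⋎ t₂ A) ⋎ jList (L.map t₂)) := by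
          simp only [vee_assoc]
      _ = t₁ A ⋎ ((t₂ A ⋎ jList (L.map t₁)) ⋎ jList (L.map t₂)) := by rw [hcomm]
      _ = (t₁ A ⋎ t₂ A) ⋎ (jList (L.map t₁) ⋎ jList (L.map t₂)) := by
          simp only [vee_assoc]
      _ = (t₁ A ⋎ t₂ A) ⋎ jList (L.map fun A => t₁ A ⋎ t₂ A) := by rw [ih hnd']

theorem fam_diff {v : Fin n → T} {t₁ t₂ : Idx n → T}
    (h₁ : IsTermFam v t₁) (h₂ : IsTermFam v t₂) :
    ∀ L : List (Idx n), L.Nodup →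
      jList (L.map t₁) ∖ jList (L.map t₂) = jList (L.map fun A => t₁ A ∖ t₂ A) := by
  intro L
  induction L with
  | nil => intro _; exact zero_diff _
  | cons A L ih =>
    intro hnd
    obtain ⟨hA, hnd'⟩ := List.nodup_cons.mp hnd
    simp only [List.map_cons, jList_cons]
    rw [orth_diff (fam_orth_jList_r h₁ h₂ hA) (fam_orth_jList_l h₂ h₁ hA)
      (fam_orth_jList_l h₁ h₂ hA) (fam_orth_jList_r h₂ h₁ hA)
      (fam_orth_jList_r h₁ h₁ hA) (fam_orth_jList_l h₁ h₁ hA), ih hnd']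

/-- The canonical enumeration of components. -/
noncomputable def enumI (n : ℕ) : List (Idx n) := (Finset.univ : Finset (Idx n)).toList

theorem enumI_nodup : (enumI n).Nodup := Finset.nodup_toList _

theorem enumI_mem (A : Idx n) : A ∈ enumI n := by
  simp [enumI]

/-- The component term of an element of the model. -/
def gterm (v : Fin n → T) (w : F n) (A : Idx n) : T :=
  match w A with
  | none => zero
  | some (p, q) => Et v A.1 p.1 q.1

theorem gterm_fam (v : Fin n → T) (w : F n) : IsTermFam v (gterm v w) := by
  intro A
  unfold gterm
  cases w A with
  | none => exact Or.inl rfl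
  | some pq => exact Or.inr ⟨pq.1.1, pq.2.1, rfl⟩

/-- The inverse map from the model to any SBA with chosen generators. -/
noncomputable def gbar (v : Fin n → T) (w : F n) : T := jList ((enumI n).map (gterm v w))

theorem gterm_none {v : Fin n → T} {w : F n} {A : Idx n} (h : w A = none) :
    gterm v w A = zero := by
  unfold gterm; rw [h]

theorem gterm_some {v : Fin n → T} {w : F n} {A : Idx n}
    {pq : {a // a ∈ A.1} × {a // a ∈ A.1}} (h : w A = some pq) :
    gterm v w A = Et v A.1 pq.1.1 pq.2.1 := by
  unfold gterm; rw [h]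

theorem gterm_wedge (v : Fin n → T) (w w' : F n) (A : Idx n) :
    gterm v (w ⋏ w') A = gterm v w A ⋏ gterm v w' A := by
  have happ : (w ⋏ w') A = w A ⋏ w' A := rfl
  cases hw : w A with
  | none =>
    have h1 : (w ⋏ w') A = none := by
      rw [happ, hw]; exact zero_wedge _
    rw [gterm_none h1, gterm_none hw, zero_wedge]
  | some p =>
    cases hw' : w' A with
    | none =>
      have h1 : (w ⋏ w') A = none := by
        rw [happ, hw, hw']; exact wedge_zero _
      rw [gterm_none h1, gterm_some hw, gterm_none hw', wedge_zero]
    | some q =>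
      have h1 : (w ⋏ w') A = some (p.1, q.2) := by
        rw [happ, hw, hw']; rfl
      rw [gterm_some h1, gterm_some hw, gterm_some hw']
      exact (EtEt p.2.2 q.1.2).symm

theorem gterm_vee (v : Fin n → T) (w w' : F n) (A : Idx n) :
    gterm v (w ⋎ w') A = gterm v w A ⋎ gterm v w' A := by
  have happ : (w ⋎ w') A = w A ⋎ w' A := rfl
  cases hw : w A with
  | none =>
    have h1 : (w ⋎ w') A = w' A := by rw [happ, hw]; exact zero_vee _
    cases hw' : w' A with
    | none =>
      rw [gterm_none (h1.trans hw'), gterm_none hw, gterm_none hw', vee_zero]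
    | some q =>
      rw [gterm_some (h1.trans hw'), gterm_none hw, gterm_some hw', zero_vee]
  | some p =>
    cases hw' : w' A with
    | none =>
      have h1 : (w ⋎ w') A = some p := by rw [happ, hw, hw']; exact vee_zero _
      rw [gterm_some h1, gterm_some hw, gterm_none hw', vee_zero]
    | some q =>
      have h1 : (w ⋎ w') A = some (q.1, p.2) := by rw [happ, hw, hw']; rfl
      rw [gterm_some h1, gterm_some hw, gterm_some hw']
      exact (EtJoin p.1.2 p.2.2 q.1.2 q.2.2).symm

theorem gterm_diff (v : Fin n → T) (w w' : F n) (A : Idx n) :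
    gterm v (w ∖ w') A = gterm v w A ∖ gterm v w' A := by
  have happ : (w ∖ w') A = w A ∖ w' A := rfl
  cases hw' : w' A with
  | none =>
    have h1 : (w ∖ w') A = w A := by rw [happ, hw']; exact diff_zero _
    cases hw : w A with
    | none =>
      rw [gterm_none (h1.trans hw), gterm_none hw, gterm_none hw', diff_zero]
    | some p =>
      rw [gterm_some (h1.trans hw), gterm_some hw, gterm_none hw', diff_zero]
  | some q =>
    have h1 : (w ∖ w') A = none := by
      rw [happ, hw']
      cases w A <;> rfl
    cases hw : w A with
    | none =>
      rw [gterm_none h1, gterm_none hw, gterm_some hw', zero_diff]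
    | some p =>
      rw [gterm_none h1, gterm_some hw, gterm_some hw']
      exact (EtDiff p.1.2 p.2.2 q.1.2 q.2.2).symm

theorem gterm_zero (v : Fin n → T) (A : Idx n) :
    gterm v (zero : F n) A = zero := gterm_none rfl

theorem gbar_wedge (v : Fin n → T) (w w' : F n) :
    gbar v (w ⋏ w') = gbar v w ⋏ gbar v w' := by
  unfold gbar
  rw [fam_wedge (gterm_fam v w) (gterm_fam v w') (enumI n) enumI_nodup]
  congr 1
  exact List.map_congr_left (fun A _ => gterm_wedge v w w' A)

theorem gbar_vee (v : Fin n → T) (w w' : F n) :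
    gbar v (w ⋎ w') = gbar v w ⋎ gbar v w' := by
  unfold gbar
  rw [fam_vee (gterm_fam v w) (gterm_fam v w') (enumI n) enumI_nodup]
  congr 1
  exact List.map_congr_left (fun A _ => gterm_vee v w w' A)

theorem gbar_diff (v : Fin n → T) (w w' : F n) :
    gbar v (w ∖ w') = gbar v w ∖ gbar v w' := by
  unfold gbar
  rw [fam_diff (gterm_fam v w) (gterm_fam v w') (enumI n) enumI_nodup]
  congr 1
  exact List.map_congr_left (fun A _ => gterm_diff v w w' A)

theorem gbar_zero (v : Fin n → T) : gbar v (zero : F n) = zero := by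
  unfold gbar
  refine jList_zero ?_
  intro a ha
  obtain ⟨A, -, rfl⟩ := List.mem_map.mp ha
  exact gterm_zero v A

end SBAModel
namespace SBA

variable {S : Type u} [SBA S]

theorem jList_single {γ : Type*} {e : γ} {g : γ → S} {L : List γ}
    (hnd : L.Nodup) (he : e ∈ L) (hz : ∀ b ∈ L, b ≠ e → g b = zero) :
    jList (L.map g) = g e := by
  induction L with
  | nil => simp at he
  | cons B L ih =>
    obtain ⟨hB, hnd'⟩ := List.nodup_cons.mp hnd
    rw [List.map_cons, jList_cons]
    rcases List.mem_cons.mp he with h0 | h0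
    · subst h0
      have : jList (L.map g) = zero := by
        refine jList_zero ?_
        intro a ha
        obtain ⟨C, hC, rfl⟩ := List.mem_map.mp ha
        exact hz C (by simp [hC]) (fun h => hB (h ▸ hC))
      rw [this, vee_zero]
    · rw [hz B (by simp) (fun h => hB (h ▸ h0)), zero_vee]
      exact ih hnd' h0 (fun b hb hbe => hz b (by simp [hb]) hbe)

theorem jList_map_filter {γ : Type*} {g : γ → S} {p : γ → Prop}
    [DecidablePred p] {L : List γ} (hz : ∀ b ∈ L, ¬ p b → g b = zero) :
    jList (L.map g) = jList ((L.filter p).map g) := by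
  induction L with
  | nil => rfl
  | cons B L ih =>
    by_cases hp : p B
    · rw [List.map_cons, jList_cons, List.filter_cons_of_pos (by simpa using hp),
        List.map_cons, jList_cons, ih (fun b hb => hz b (by simp [hb]))]
    · rw [List.map_cons, jList_cons, hz B (by simp) hp, zero_vee,
        List.filter_cons_of_neg (by simpa using hp),
        ih (fun b hb => hz b (by simp [hb]))]

end SBA

namespace SBAModel

open SBA

set_option linter.unusedSectionVars false

variable {n : ℕ}

theorem XF_apply_pos {i : Fin n} {A : Idx n} (h : i ∈ A.1) :
    XF n i A = some (⟨i, h⟩, ⟨i, h⟩) := dif_pos h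

theorem XF_apply_neg {i : Fin n} {A : Idx n} (h : i ∉ A.1) :
    XF n i A = none := dif_neg h

theorem mA_XF_apply (B : Finset (Fin n)) (A : Idx n) :
    mA (XF n) B A = mList ((B.sort (· ≤ ·)).map (fun j => XF n j A)) := by
  show mList (genList (XF n) B) A = _
  rw [mList_apply]
  show mList (((B.sort (· ≤ ·)).map (XF n)).map (fun f => f A)) = _
  rw [List.map_map]
  rfl

theorem DA_XF_apply (B : Finset (Fin n)) (A : Idx n) :
    DA (XF n) B A = jList ((Bᶜ.sort (· ≤ ·)).map (fun j => XF n j A)) := by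
  show jList (genList (XF n) Bᶜ) A = _
  rw [jList_apply]
  show jList (((Bᶜ.sort (· ≤ ·)).map (XF n)).map (fun f => f A)) = _
  rw [List.map_map]
  rfl

theorem Et_XF_ne {B : Finset (Fin n)} {a b : Fin n} {A : Idx n}
    (hne : A.1 ≠ B) : Et (XF n) B a b A = none := by
  have happ : Et (XF n) B a b A = (XF n a A ⋏ sA (XF n) B A) ⋏ XF n b A := rfl
  have happ2 : sA (XF n) B A = mA (XF n) B A ∖ DA (XF n) B A := rfl
  have hs : sA (XF n) B A = none := by
    by_cases hsub : B ⊆ A.1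
    · have hss : B ⊂ A.1 := lt_of_le_of_ne hsub (fun h => hne h.symm)
      obtain ⟨j, hjA, hjB⟩ := Finset.exists_of_ssubset hss
      have hD : DA (XF n) B A ≠ none := by
        rw [DA_XF_apply]
        refine jListP_some (x := XF n j A) ?_ ?_
        · exact List.mem_map.mpr
            ⟨j, (Finset.mem_sort _).mpr (Finset.mem_compl.mpr hjB), rfl⟩
        · rw [XF_apply_pos hjA]; simp
      obtain ⟨q, hq⟩ := Option.ne_none_iff_exists'.mp hD
      rw [happ2, hq]
      cases mA (XF n) B A <;> rfl
    · obtain ⟨j, hjB, hjA⟩ := Finset.not_subset.mp hsub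
      have hm : mA (XF n) B A = none := by
        rw [mA_XF_apply]
        exact mList_zero (List.mem_map.mpr
          ⟨j, (Finset.mem_sort _).mpr hjB, XF_apply_neg hjA⟩)
      rw [happ2, hm]
      exact zero_diff _
  rw [happ, hs]
  have h1 : XF n a A ⋏ (none : Option _) = none := wedge_zero _
  rw [h1]
  exact zero_wedge _

theorem Et_XF_eq {B : Finset (Fin n)} {a b : Fin n} {A : Idx n}
    (h : A.1 = B) (ha : a ∈ A.1) (hb : b ∈ A.1) :
    Et (XF n) B a b A = some (⟨a, ha⟩, ⟨b, hb⟩) := by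
  subst h
  have hm : ∃ p, mA (XF n) A.1 A = some p := by
    rw [mA_XF_apply]
    refine mListP_some ?_ ?_
    · simp [sort_ne_nil A.2]
    · intro x hx
      obtain ⟨j, hj, rfl⟩ := List.mem_map.mp hx
      rw [XF_apply_pos ((Finset.mem_sort _).mp hj)]
      simp
  obtain ⟨p, hp⟩ := hm
  have hD : DA (XF n) A.1 A = none := by
    rw [DA_XF_apply]
    refine jList_zero ?_
    intro x hx
    obtain ⟨j, hj, rfl⟩ := List.mem_map.mp hx
    exact XF_apply_neg (Finset.mem_compl.mp ((Finset.mem_sort _).mp hj))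
  have hs : sA (XF n) A.1 A = some p := by
    show mA (XF n) A.1 A ∖ DA (XF n) A.1 A = some p
    rw [hD, hp]
    exact diff_zero _
  show (XF n a A ⋏ sA (XF n) A.1 A) ⋏ XF n b A = _
  rw [hs, XF_apply_pos ha, XF_apply_pos hb]
  rfl

/-- `gbar` over the model's own generators is the identity. -/
theorem gbar_XF (w : F n) : gbar (XF n) w = w := by
  funext A
  have h1 : gbar (XF n) w A
      = jList ((enumI n).map (fun B => gterm (XF n) w B A)) := by
    show jList ((enumI n).map (gterm (XF n) w)) A = _
    rw [jList_apply, List.map_map]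
    rfl
  rw [h1]
  have h2 : jList ((enumI n).map (fun B => gterm (XF n) w B A))
      = gterm (XF n) w A A := by
    refine jList_single enumI_nodup (enumI_mem A) ?_
    intro B hB hBA
    cases hw : w B with
    | none =>
      rw [gterm_none hw]
      rfl
    | some pq =>
      rw [gterm_some hw]
      exact Et_XF_ne (fun h => hBA (Subtype.ext h.symm))
  rw [h2]
  cases hw : w A with
  | none => rw [gterm_none hw]; rfl
  | some pq =>
    rw [gterm_some hw]
    rw [Et_XF_eq rfl pq.1.2 pq.2.2]

/-- `gbar` sends model generators to the chosen generators. -/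
theorem gbar_XF_gen {T : Type u} [SBA T] (v : Fin n → T) (i : Fin n) :
    gbar v (XF n i) = v i := by
  classical
  have hterm_pos : ∀ B : Idx n, i ∈ B.1 → gterm v (XF n i) B = Et v B.1 i i := by
    intro B h
    exact gterm_some (XF_apply_pos h)
  have hterm_neg : ∀ B : Idx n, i ∉ B.1 → gterm v (XF n i) B = zero := by
    intro B h
    exact gterm_none (XF_apply_neg h)
  have h1 : gbar v (XF n i)
      = jList ((((enumI n).filter (fun A => i ∈ A.1)).map
          (fun A : Idx n => Et v A.1 i i))) := by
    show jList ((enumI n).map (gterm v (XF n i))) = _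
    rw [jList_map_filter (p := fun A : Idx n => i ∈ A.1)
      (fun B _ h => hterm_neg B h)]
    congr 1
    refine List.map_congr_left ?_
    intro B hB
    exact hterm_pos B (by simpa using (List.mem_filter.mp hB).2)
  set others : List (Fin n) := (({i} : Finset (Fin n))ᶜ).sort (· ≤ ·) with hothers
  have hothersnd : others.Nodup := Finset.sort_nodup _ _
  have hotherstf : others.toFinset = ({i} : Finset (Fin n))ᶜ := Finset.sort_toFinset _ _
  have hperm : ((enumI n).filter (fun A => i ∈ A.1)).Perm
      ((subs others).map (fun B => (⟨B ∪ {i}, ⟨i, by simp⟩⟩ : Idx n))) := by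
    refine (List.perm_ext_iff_of_nodup (enumI_nodup.filter _) ?_).mpr ?_
    · refine List.Nodup.map_on ?_ (subs_nodup hothersnd)
      intro B hB B' hB' h
      have hBi : i ∉ B := by
        intro hh
        have := subs_mem.mp hB hh
        rw [hotherstf] at this
        simp at this
      have hBi' : i ∉ B' := by
        intro hh
        have := subs_mem.mp hB' hh
        rw [hotherstf] at this
        simp at this
      have hval : B ∪ {i} = B' ∪ {i} := congrArg Subtype.val h
      have := congrArg (fun s => Finset.erase s i) hval
      simpa [Finset.erase_union_distrib, Finset.erase_eq_of_notMem hBi,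
        Finset.erase_eq_of_notMem hBi', Finset.erase_singleton] using this
    · intro A
      simp only [List.mem_filter, List.mem_map]
      constructor
      · rintro ⟨-, hiA⟩
        have hiA' : i ∈ A.1 := by simpa using hiA
        refine ⟨A.1.erase i, ?_, ?_⟩
        · refine subs_mem.mpr ?_
          rw [hotherstf]
          intro a ha
          simp only [Finset.mem_compl, Finset.mem_singleton]
          exact (Finset.mem_erase.mp ha).1
        · refine Subtype.ext ?_
          show A.1.erase i ∪ {i} = A.1
          ext a
          by_cases hai : a = i
          · subst hai; simp [hiA']
          · simp [hai]
      · rintro ⟨B, hB, rfl⟩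
        refine ⟨enumI_mem _, by simp⟩
  have h2 : jList ((((enumI n).filter (fun A => i ∈ A.1)).map
      (fun A : Idx n => Et v A.1 i i)))
      = jList ((subs others).map (fun B => Et v (B ∪ {i}) i i)) := by
    have hmapped := hperm.map (fun A : Idx n => Et v A.1 i i)
    rw [List.map_map] at hmapped
    refine jList_perm hmapped ?_
    intro a ha b hb
    obtain ⟨A, -, rfl⟩ := List.mem_map.mp ha
    obtain ⟨A', -, rfl⟩ := List.mem_map.mp hb
    by_cases hAA : A = A'
    · rw [hAA]
    · exact orth_vee_comm (Et_orth (fun h => hAA (Subtype.ext h))).1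
        (Et_orth (fun h => hAA (Subtype.ext h))).2
  rw [h1, h2]
  exact pou v i

/-- Lifting an SBA structure to another universe. -/
instance instULift (γ : Type) [SBA γ] : SBA (ULift.{u} γ) where
  wedge a b := ⟨a.down ⋏ b.down⟩
  vee a b := ⟨a.down ⋎ b.down⟩
  diff a b := ⟨a.down ∖ b.down⟩
  zero := ⟨zero⟩
  wedge_assoc x y z := congrArg ULift.up (wedge_assoc _ _ _)
  vee_assoc x y z := congrArg ULift.up (vee_assoc _ _ _)
  absorb1 x y := congrArg ULift.up (absorb1 _ _)
  absorb2 x y := congrArg ULift.up (absorb2 _ _)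
  absorb3 x y := congrArg ULift.up (absorb3 _ _)
  absorb4 x y := congrArg ULift.up (absorb4 _ _)
  sdistrib1 x y z := congrArg ULift.up (sdistrib1 _ _ _)
  sdistrib2 x y z := congrArg ULift.up (sdistrib2 _ _ _)
  zero_wedge x := congrArg ULift.up (zero_wedge _)
  wedge_zero x := congrArg ULift.up (wedge_zero _)
  zero_vee x := congrArg ULift.up (zero_vee _)
  vee_zero x := congrArg ULift.up (vee_zero _)
  diff_ax1 x y := congrArg ULift.up (diff_ax1 _ _)
  diff_ax2 x y := congrArg ULift.up (diff_ax2 _ _)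
  diff_ax3 x y := congrArg ULift.up (diff_ax3 _ _)

end SBAModel
namespace SBAModel

open SBA

set_option linter.unusedSectionVars false

variable {n : ℕ}

/-! ### Hom transport of `gbar` -/

section HomMap

variable {T : Type u} [SBA T] {T' : Type v} [SBA T']
variable {φ : T → T'}

theorem map_jList (hv : ∀ a b, φ (a ⋎ b) = φ a ⋎ φ b) (hz : φ zero = zero)
    (l : List T) : φ (jList l) = jList (l.map φ) := by
  induction l with
  | nil => exact hz
  | cons a l ih => rw [jList_cons, hv, ih]; rfl

theorem map_mList (hw : ∀ a b, φ (a ⋏ b) = φ a ⋏ φ b) (hz : φ zero = zero)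
    (l : List T) : φ (mList l) = mList (l.map φ) := by
  induction l with
  | nil => exact hz
  | cons a l ih =>
    cases l with
    | nil => rfl
    | cons b m =>
      rw [mList_cons a (by simp), hw, ih]
      exact (mList_cons (φ a) (by simp)).symm

theorem map_Et (hw : ∀ a b, φ (a ⋏ b) = φ a ⋏ φ b)
    (hv : ∀ a b, φ (a ⋎ b) = φ a ⋎ φ b)
    (hd : ∀ a b, φ (a ∖ b) = φ a ∖ φ b) (hz : φ zero = zero)
    (v : Fin n → T) (A : Finset (Fin n)) (a b : Fin n) :
    φ (Et v A a b) = Et (φ ∘ v) A a b := by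
  have hm : φ (mA v A) = mA (φ ∘ v) A := by
    show φ (mList (genList v A)) = mList (genList (φ ∘ v) A)
    rw [map_mList hw hz]
    show mList ((((A.sort (· ≤ ·)).map v)).map φ) = _
    rw [List.map_map]
    rfl
  have hD : φ (DA v A) = DA (φ ∘ v) A := by
    show φ (jList (genList v Aᶜ)) = jList (genList (φ ∘ v) Aᶜ)
    rw [map_jList hv hz]
    show jList ((((Aᶜ.sort (· ≤ ·)).map v)).map φ) = _
    rw [List.map_map]
    rfl
  have hs : φ (sA v A) = sA (φ ∘ v) A := by
    show φ (mA v A ∖ DA v A) = mA (φ ∘ v) A ∖ DA (φ ∘ v) A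
    rw [hd, hm, hD]
  show φ ((v a ⋏ sA v A) ⋏ v b) = ((φ ∘ v) a ⋏ sA (φ ∘ v) A) ⋏ (φ ∘ v) b
  rw [hw, hw, hs]
  rfl

theorem map_gbar (hw : ∀ a b, φ (a ⋏ b) = φ a ⋏ φ b)
    (hv : ∀ a b, φ (a ⋎ b) = φ a ⋎ φ b)
    (hd : ∀ a b, φ (a ∖ b) = φ a ∖ φ b) (hz : φ zero = zero)
    (v : Fin n → T) (w : F n) :
    φ (gbar v w) = gbar (φ ∘ v) w := by
  unfold gbar
  rw [map_jList hv hz, List.map_map]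
  congr 1
  refine List.map_congr_left ?_
  intro A _
  show φ (gterm v w A) = gterm (φ ∘ v) w A
  cases hwA : w A with
  | none => rw [gterm_none hwA, gterm_none hwA]; exact hz
  | some pq => rw [gterm_some hwA, gterm_some hwA]; exact map_Et hw hv hd hz v _ _ _

end HomMap

/-! ### Atoms of the model -/

theorem P_nle_none {α : Type*} {x : Option (α × α)} (h : nle x none) :
    x = none := by
  have := h.1
  rw [show (x ⋏ none : Option (α × α)) = none from wedge_zero x] at this
  exact this.symm

theorem P_nle_some {α : Type*} {x : Option (α × α)} {p : α × α}
    (h : nle x (some p)) : x = none ∨ x = some p := by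
  cases x with
  | none => exact Or.inl rfl
  | some q =>
    right
    have h1 : (some (q.1, p.2) : Option (α × α)) = some q := h.1
    have h2 : (some (p.1, q.2) : Option (α × α)) = some q := h.2
    have e1 : p.2 = q.2 := congrArg (fun o => (Option.getD o (q.1, q.2)).2) h1
    have e2 : p.1 = q.1 := congrArg (fun o => (Option.getD o (q.1, q.2)).1) h2
    have : p = q := Prod.ext e2 e1
    rw [this]

theorem nle_apply {x y : F n} (h : nle x y) (A : Idx n) : nle (x A) (y A) :=
  ⟨congrFun h.1 A, congrFun h.2 A⟩

/-- The atom of the model determined by a component and a pair. -/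
def atomOf (A : Idx n) (pq : {a // a ∈ A.1} × {a // a ∈ A.1}) : F n := fun B =>
  if h : B = A then
    some (⟨pq.1.1, by rw [h]; exact pq.1.2⟩, ⟨pq.2.1, by rw [h]; exact pq.2.2⟩)
  else none

theorem atomOf_self (A : Idx n) (pq : {a // a ∈ A.1} × {a // a ∈ A.1}) :
    atomOf A pq A = some pq := by
  unfold atomOf
  rw [dif_pos rfl]

theorem atomOf_ne {A B : Idx n} (h : B ≠ A) (pq : {a // a ∈ A.1} × {a // a ∈ A.1}) :
    atomOf A pq B = none := by
  unfold atomOf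
  rw [dif_neg h]

theorem isAtom_atomOf (A : Idx n) (pq : {a // a ∈ A.1} × {a // a ∈ A.1}) :
    IsAtom (atomOf A pq) := by
  constructor
  · intro h
    have := congrFun h A
    rw [atomOf_self] at this
    exact Option.some_ne_none _ this
  · intro w hw
    by_cases h0 : w A = none
    · left
      funext B
      by_cases hBA : B = A
      · rw [hBA]; exact h0
      · have := nle_apply hw B
        rw [atomOf_ne hBA] at this
        exact P_nle_none this
    · right
      funext B
      by_cases hBA : B = A
      · rw [hBA]
        have := nle_apply hw A
        rw [atomOf_self] at this
        rcases P_nle_some this with h | h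
        · exact absurd h h0
        · rw [h, atomOf_self]
      · have := nle_apply hw B
        rw [atomOf_ne hBA] at this
        rw [P_nle_none this, atomOf_ne hBA]

theorem atom_eq_atomOf {w : F n} (hw : IsAtom w) {A : Idx n}
    {pq : {a // a ∈ A.1} × {a // a ∈ A.1}} (h : w A = some pq) :
    w = atomOf A pq := by
  have hle : nle (atomOf A pq) w := by
    constructor
    · funext B
      by_cases hBA : B = A
      · show atomOf A pq B ⋏ w B = atomOf A pq B
        rw [hBA, atomOf_self, h]
        rfl
      · show atomOf A pq B ⋏ w B = atomOf A pq B
        rw [atomOf_ne hBA]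
        exact zero_wedge _
    · funext B
      by_cases hBA : B = A
      · show w B ⋏ atomOf A pq B = atomOf A pq B
        rw [hBA, atomOf_self, h]
        rfl
      · show w B ⋏ atomOf A pq B = atomOf A pq B
        rw [atomOf_ne hBA]
        exact wedge_zero _
  rcases hw.2 _ hle with h0 | h0
  · exfalso
    have := congrFun h0 A
    rw [atomOf_self] at this
    exact Option.some_ne_none _ this
  · exact h0.symm

/-- Every atom of the model comes from a component and a pair. -/
theorem atom_exists {w : F n} (hw : IsAtom w) :
    ∃ A pq, w = atomOf A pq := by
  by_cases h : ∀ A, w A = none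
  · exact absurd (funext h : w = zero) hw.1
  push_neg at h
  obtain ⟨A, hA⟩ := h
  obtain ⟨pq, hpq⟩ := Option.ne_none_iff_exists'.mp hA
  exact ⟨A, pq, atom_eq_atomOf hw hpq⟩

theorem atomOf_injective :
    Function.Injective (fun s : Σ A : Idx n, {a // a ∈ A.1} × {a // a ∈ A.1} =>
      atomOf s.1 s.2) := by
  rintro ⟨A, pq⟩ ⟨A', pq'⟩ h
  have hAA : A = A' := by
    by_contra hne
    have h2 := congrFun h A
    change atomOf A pq A = atomOf A' pq' A at h2
    rw [atomOf_self, atomOf_ne hne] at h2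
    exact Option.some_ne_none _ h2
  subst hAA
  have h2 := congrFun h A
  change atomOf A pq A = atomOf A pq' A at h2
  rw [atomOf_self, atomOf_self] at h2
  rw [Option.some_inj.mp h2]

theorem atom_set_eq :
    {w : F n | IsAtom w} = Set.range
      (fun s : Σ A : Idx n, {a // a ∈ A.1} × {a // a ∈ A.1} =>
        atomOf s.1 s.2) := by
  ext w
  constructor
  · intro hw
    obtain ⟨A, pq, rfl⟩ := atom_exists hw
    exact ⟨⟨A, pq⟩, rfl⟩
  · rintro ⟨⟨A, pq⟩, rfl⟩
    exact isAtom_atomOf A pq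

end SBAModel
namespace SBAModel

open SBA

theorem pow_sum1 {α : Type*} [DecidableEq α] (s : Finset α) :
    2 * ∑ A ∈ s.powerset, A.card = s.card * 2 ^ s.card := by
  classical
  induction s using Finset.induction_on with
  | empty => simp
  | @insert a s ha ih =>
    have hinj : ∀ C ∈ s.powerset, ∀ C' ∈ s.powerset,
        insert a C = insert a C' → C = C' := by
      intro C hC C' hC' h
      have haC : a ∉ C := fun hh => ha (Finset.mem_powerset.mp hC hh)
      have haC' : a ∉ C' := fun hh => ha (Finset.mem_powerset.mp hC' hh)
      have := congrArg (fun t => Finset.erase t a) h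
      simpa [Finset.erase_insert, haC, haC'] using this
    have hdisj : Disjoint s.powerset (s.powerset.image (insert a)) := by
      refine Finset.disjoint_left.mpr ?_
      intro t ht htimg
      obtain ⟨C, hC, rfl⟩ := Finset.mem_image.mp htimg
      exact ha (Finset.mem_powerset.mp ht (Finset.mem_insert_self a C))
    have hcard : ∀ C ∈ s.powerset, (insert a C).card = C.card + 1 := fun C hC =>
      Finset.card_insert_of_notMem (fun hh => ha (Finset.mem_powerset.mp hC hh))
    rw [Finset.powerset_insert, Finset.sum_union hdisj, Finset.sum_image hinj,
      Finset.sum_congr rfl hcard, Finset.sum_add_distrib, Finset.sum_const,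
      Finset.card_powerset, smul_eq_mul, mul_one,
      Finset.card_insert_of_notMem ha]
    calc 2 * (∑ A ∈ s.powerset, A.card + (∑ A ∈ s.powerset, A.card + 2 ^ s.card))
        = 2 * ∑ A ∈ s.powerset, A.card
          + (2 * ∑ A ∈ s.powerset, A.card + 2 * 2 ^ s.card) := by ring
      _ = s.card * 2 ^ s.card + (s.card * 2 ^ s.card + 2 * 2 ^ s.card) := by
          rw [ih]
      _ = (s.card + 1) * (2 ^ s.card * 2) := by ring
      _ = (s.card + 1) * 2 ^ (s.card + 1) := by rw [pow_succ]

theorem pow_sum2 {α : Type*} [DecidableEq α] (s : Finset α) :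
    4 * ∑ A ∈ s.powerset, (A.card * A.card)
      = s.card * (s.card + 1) * 2 ^ s.card := by
  classical
  induction s using Finset.induction_on with
  | empty => simp
  | @insert a s ha ih =>
    have hinj : ∀ C ∈ s.powerset, ∀ C' ∈ s.powerset,
        insert a C = insert a C' → C = C' := by
      intro C hC C' hC' h
      have haC : a ∉ C := fun hh => ha (Finset.mem_powerset.mp hC hh)
      have haC' : a ∉ C' := fun hh => ha (Finset.mem_powerset.mp hC' hh)
      have := congrArg (fun t => Finset.erase t a) h
      simpa [Finset.erase_insert, haC, haC'] using this
    have hdisj : Disjoint s.powerset (s.powerset.image (insert a)) := by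
      refine Finset.disjoint_left.mpr ?_
      intro t ht htimg
      obtain ⟨C, hC, rfl⟩ := Finset.mem_image.mp htimg
      exact ha (Finset.mem_powerset.mp ht (Finset.mem_insert_self a C))
    have hterm : ∀ C ∈ s.powerset,
        (insert a C).card * (insert a C).card
          = C.card * C.card + (2 * C.card + 1) := by
      intro C hC
      rw [Finset.card_insert_of_notMem
        (fun hh => ha (Finset.mem_powerset.mp hC hh))]
      ring
    rw [Finset.powerset_insert, Finset.sum_union hdisj, Finset.sum_image hinj,
      Finset.sum_congr rfl hterm, Finset.sum_add_distrib, Finset.sum_add_distrib,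
      Finset.sum_const, Finset.card_powerset, smul_eq_mul, mul_one,
      Finset.card_insert_of_notMem ha]
    have h1 : 2 * ∑ A ∈ s.powerset, A.card = s.card * 2 ^ s.card := pow_sum1 s
    have hsum2 : ∑ C ∈ s.powerset, 2 * C.card
        = 2 * ∑ C ∈ s.powerset, C.card := by
      rw [Finset.mul_sum]
    rw [hsum2, pow_succ]
    calc 4 * (∑ A ∈ s.powerset, A.card * A.card
          + (∑ A ∈ s.powerset, A.card * A.card
            + (2 * ∑ A ∈ s.powerset, A.card + 2 ^ s.card)))
        = 2 * (4 * ∑ A ∈ s.powerset, A.card * A.card)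
          + (4 * (2 * ∑ A ∈ s.powerset, A.card) + 4 * 2 ^ s.card) := by ring
      _ = 2 * (s.card * (s.card + 1) * 2 ^ s.card)
          + (4 * (s.card * 2 ^ s.card) + 4 * 2 ^ s.card) := by rw [ih, h1]
      _ = (s.card + 1) * ((s.card + 1) + 1) * (2 ^ s.card * 2) := by ring

theorem sum_idx (n : ℕ) :
    ∑ A : Idx n, (A.1.card * A.1.card)
      = ∑ A ∈ (Finset.univ : Finset (Fin n)).powerset, (A.card * A.card) := by
  classical
  have h1 : ∑ A : Idx n, (A.1.card * A.1.card)
      = ∑ A ∈ Finset.univ.filter (fun A : Finset (Fin n) => A.Nonempty),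
          (A.card * A.card) := by
    rw [← Finset.sum_subtype_eq_sum_filter, Finset.subtype_univ]
  have h2 : ∑ A ∈ Finset.univ.filter
      (fun A : Finset (Fin n) => ¬A.Nonempty), (A.card * A.card) = 0 := by
    refine Finset.sum_eq_zero ?_
    intro A hA
    rw [Finset.not_nonempty_iff_eq_empty.mp (Finset.mem_filter.mp hA).2]
    rfl
  rw [h1, Finset.powerset_univ,
    ← Finset.sum_filter_add_sum_filter_not Finset.univ
      (fun A : Finset (Fin n) => A.Nonempty) (fun A => A.card * A.card),
    h2, add_zero]

end SBAModel

open SBAModel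

theorem stmt9' (n : ℕ) (hn : 1 ≤ n) (S : Type u) [SBA S]
    (x : Fin n → S) (hinj : Function.Injective x)
    (hfree : FreelyGenerates S (Set.range x)) :
    {a : S | SBA.IsAtom a}.Finite ∧
      4 * {a : S | SBA.IsAtom a}.ncard = n * (n + 1) * 2 ^ n := by
  classical
  obtain ⟨hgen, hlift⟩ := hfree
  obtain ⟨f, hfhom, hfx⟩ := hlift (ULift.{u} (F n))
    (fun y => ⟨XF n ((Equiv.ofInjective x hinj).symm y)⟩)
  obtain ⟨hfw, hfv, hfd, hfz⟩ := hfhom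
  set φ : S → F n := fun s => (f s).down with hφdef
  have hφw : ∀ a b, φ (a ⋏ b) = φ a ⋏ φ b := fun a b =>
    congrArg ULift.down (hfw a b)
  have hφv : ∀ a b, φ (a ⋎ b) = φ a ⋎ φ b := fun a b =>
    congrArg ULift.down (hfv a b)
  have hφd : ∀ a b, φ (a ∖ b) = φ a ∖ φ b := fun a b =>
    congrArg ULift.down (hfd a b)
  have hφz : φ zero = zero := congrArg ULift.down hfz
  have hφx : ∀ i, φ (x i) = XF n i := by
    intro i
    have h1 := hfx ⟨x i, Set.mem_range_self i⟩
    have h2 : (Equiv.ofInjective x hinj).symm ⟨x i, Set.mem_range_self i⟩ = i :=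
      Equiv.ofInjective_symm_apply hinj i
    show (f (x i)).down = XF n i
    rw [h1, h2]
  -- ψ ∘ φ = id
  have hψφ : ∀ s : S, gbar x (φ s) = s := by
    have hTuniv : {s : S | gbar x (φ s) = s} = Set.univ := by
      refine hgen _ ?_ ?_ ?_
      · rintro y ⟨i, rfl⟩
        show gbar x (φ (x i)) = x i
        rw [hφx i, gbar_XF_gen]
      · show gbar x (φ zero) = zero
        rw [hφz, gbar_zero]
      · intro a b ha hb
        refine ⟨?_, ?_, ?_⟩
        · show gbar x (φ (a ⋏ b)) = a ⋏ b
          rw [hφw, gbar_wedge, ha, hb]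
        · show gbar x (φ (a ⋎ b)) = a ⋎ b
          rw [hφv, gbar_vee, ha, hb]
        · show gbar x (φ (a ∖ b)) = a ∖ b
          rw [hφd, gbar_diff, ha, hb]
    intro s
    have : s ∈ (Set.univ : Set S) := trivial
    rw [← hTuniv] at this
    exact this
  -- φ ∘ ψ = id
  have hφψ : ∀ w : F n, φ (gbar x w) = w := by
    intro w
    rw [map_gbar hφw hφv hφd hφz]
    have hcomp : φ ∘ x = XF n := funext hφx
    rw [hcomp, gbar_XF]
  have hψinj : Function.Injective (gbar x (T := S)) := by
    intro w w' h
    rw [← hφψ w, ← hφψ w', h]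
  -- atom transfer
  have hatom : ∀ s : S, IsAtom s ↔ IsAtom (φ s) := by
    intro s
    constructor
    · intro hs
      constructor
      · intro h0
        exact hs.1 (by rw [← hψφ s, h0, gbar_zero])
      · intro u hu
        have h1 : nle (gbar x u) s := by
          constructor
          · have := congrArg (gbar x) hu.1
            rw [gbar_wedge, hψφ s] at this
            exact this
          · have := congrArg (gbar x) hu.2
            rw [gbar_wedge, hψφ s] at this
            exact this
        rcases hs.2 _ h1 with h0 | h0
        · left; rw [← hφψ u, h0, hφz]
        · right; rw [← hφψ u, h0]
    · intro hs
      constructor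
      · intro h0
        exact hs.1 (by rw [h0, hφz])
      · intro u hu
        have h1 : nle (φ u) (φ s) :=
          ⟨by rw [← hφw, hu.1], by rw [← hφw, hu.2]⟩
        rcases hs.2 _ h1 with h0 | h0
        · left; rw [← hψφ u, h0, gbar_zero]
        · right; rw [← hψφ u, h0, hψφ s]
  have hset : {a : S | IsAtom a} = gbar x '' {w : F n | IsAtom w} := by
    ext s
    constructor
    · intro hs
      exact ⟨φ s, (hatom s).mp hs, hψφ s⟩
    · rintro ⟨w, hw, rfl⟩
      refine (hatom _).mpr ?_
      rw [hφψ w]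
      exact hw
  constructor
  · rw [hset]
    exact (Set.toFinite _).image _
  · rw [hset, Set.ncard_image_of_injective _ hψinj]
    rw [atom_set_eq, ← Set.image_univ,
      Set.ncard_image_of_injective _ atomOf_injective, Set.ncard_univ,
      Nat.card_eq_fintype_card, Fintype.card_sigma]
    have hcards : ∀ A : Idx n,
        Fintype.card ({a // a ∈ A.1} × {a // a ∈ A.1})
          = A.1.card * A.1.card := by
      intro A
      rw [Fintype.card_prod, Fintype.card_coe]
    rw [Finset.sum_congr rfl (fun A _ => hcards A), sum_idx, pow_sum2,
      Finset.card_univ, Fintype.card_fin]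
theorem stmt9 (n : ℕ) (hn : 1 ≤ n) (S : Type u) [SBA S]
    (x : Fin n → S) (hinj : Function.Injective x)
    (hfree : FreelyGenerates S (Set.range x)) :
    {a : S | SBA.IsAtom a}.Finite ∧
      4 * {a : S | SBA.IsAtom a}.ncard = n * (n + 1) * 2 ^ n :=
  stmt9' n hn S x hinj hfree
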